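/- arXiv:1412.3340 — 13 statements merged into one kernel-verified Lean document; each statement's English description precedes it below -/
import Mathlib

section
/- On a finite graph, if u : V × I → (0,∞) is continuously differentiable in time and solves the heat equation at time t₀ (Δu = ∂_t u at t₀), then the key identity 𝓛(−u·Δ^ψ u)(·,t₀) = 2u·Γ₂^ψ(u)(·,t₀) holds, where 𝓛 = Δ − ∂_t. -/
noncomputable section

open Finset Filter

variable {V : Type*} [Fintype V]

/-- Graph Laplacian `Δf(v) = Σ_{w∼v} (f w − f v)`. -/
def lap (Adj : V → V → Prop) [DecidableRel Adj] (f : V → ℝ) (v : V) : ℝ :=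
  ∑ w, if Adj v w then f w - f v else 0

/-- ψ-Laplacian `(Δ^ψ f)(v) = Δ[ψ(f/f v)](v)`. -/
def psiLap (Adj : V → V → Prop) [DecidableRel Adj] (ψ : ℝ → ℝ) (f : V → ℝ) (v : V) : ℝ :=
  lap Adj (fun w => ψ (f w / f v)) v

/-- `ψ̄(x) = ψ'(1)(x−1) − (ψ x − ψ 1)`. -/
def psibar (ψ : ℝ → ℝ) (x : ℝ) : ℝ := deriv ψ 1 * (x - 1) - (ψ x - ψ 1)

/-- ψ-gradient `Γ^ψ = Δ^{ψ̄}`. -/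
def gammaPsi (Adj : V → V → Prop) [DecidableRel Adj] (ψ : ℝ → ℝ) (f : V → ℝ) (v : V) : ℝ :=
  lap Adj (fun w => psibar ψ (f w / f v)) v

/-- `(Ω^ψ f)(v)`. -/
def omegaPsi (Adj : V → V → Prop) [DecidableRel Adj] (ψ : ℝ → ℝ) (f : V → ℝ) (v : V) : ℝ :=
  lap Adj (fun w => deriv ψ (f w / f v) * (f w / f v) *
    (lap Adj f w / f w - lap Adj f v / f v)) v

/-- Second ψ-gradient `Γ₂^ψ`. -/
def gamma2Psi (Adj : V → V → Prop) [DecidableRel Adj] (ψ : ℝ → ℝ) (f : V → ℝ) (v : V) : ℝ :=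
  (omegaPsi Adj ψ f v + lap Adj f v * psiLap Adj ψ f v / f v
    - lap Adj (fun w => f w * psiLap Adj ψ f w) v / f v) / 2

/-- Classical gradient form `Γ(f) = (Δ(f²) − 2fΔf)/2`. -/
def gammaF (Adj : V → V → Prop) [DecidableRel Adj] (f : V → ℝ) (v : V) : ℝ :=
  (lap Adj (fun w => f w * f w) v - 2 * f v * lap Adj f v) / 2

/-- Bilinear gradient form `Γ(f,g)`. -/
def gammaBil (Adj : V → V → Prop) [DecidableRel Adj] (f g : V → ℝ) (v : V) : ℝ :=
  (lap Adj (fun w => f w * g w) v - f v * lap Adj g v - g v * lap Adj f v) / 2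

/-- Second gradient form `Γ₂(f) = (ΔΓ(f) − 2Γ(f,Δf))/2`. -/
def gamma2F (Adj : V → V → Prop) [DecidableRel Adj] (f : V → ℝ) (v : V) : ℝ :=
  (lap Adj (gammaF Adj f) v - 2 * gammaBil Adj f (lap Adj f) v) / 2

/-- Key identity: `𝓛(−u·Δ^ψ u)(·,t₀) = 2u·Γ₂^ψ(u)(·,t₀)` for solutions of the heat
equation at time `t₀`, where `𝓛 = Δ − ∂_t`. -/
theorem key_identity (Adj : V → V → Prop) [DecidableRel Adj]
    (hsymm : Symmetric Adj) (hloop : ∀ v, ¬Adj v v)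
    (ψ : ℝ → ℝ) (hψ : ContDiffOn ℝ 1 ψ (Set.Ioi 0))
    (u : V → ℝ → ℝ) (t₀ : ℝ)
    (hpos : ∀ v t, 0 < u v t)
    (hdiff : ∀ v, DifferentiableAt ℝ (u v) t₀)
    (hheat : ∀ v, deriv (u v) t₀ = lap Adj (fun w => u w t₀) v)
    (v : V) :
    lap Adj (fun w => -(u w t₀ * psiLap Adj ψ (fun z => u z t₀) w)) v
      - deriv (fun t => -(u v t * psiLap Adj ψ (fun z => u z t) v)) t₀
    = 2 * u v t₀ * gamma2Psi Adj ψ (fun z => u z t₀) v := by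
  set f : V → ℝ := fun z => u z t₀ with hf
  have hfpos : ∀ w, 0 < f w := fun w => hpos w t₀
  have hfne : ∀ w, f w ≠ 0 := fun w => (hfpos w).ne'
  have hψd : ∀ x : ℝ, 0 < x → DifferentiableAt ℝ ψ x := fun x hx =>
    (hψ.contDiffAt (isOpen_Ioi.mem_nhds hx)).differentiableAt one_ne_zero
  have hinner : ∀ w, HasDerivAt (fun t => ψ (u w t / u v t) - ψ (u v t / u v t))
      (deriv ψ (f w / f v) * (f w / f v) * (lap Adj f w / f w - lap Adj f v / f v)) t₀ := by
    intro w
    have hr : HasDerivAt (fun t => u w t / u v t)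
        ((deriv (u w) t₀ * u v t₀ - u w t₀ * deriv (u v) t₀) / (u v t₀)^2) t₀ :=
      ((hdiff w).hasDerivAt).div ((hdiff v).hasDerivAt) (hfne v)
    have hx : 0 < f w / f v := div_pos (hfpos w) (hfpos v)
    have hψh : HasDerivAt ψ (deriv ψ (f w / f v)) (f w / f v) :=
      (hψd _ hx).hasDerivAt
    have h1 : HasDerivAt (fun t => ψ (u w t / u v t))
        (deriv ψ (f w / f v) *
          ((deriv (u w) t₀ * u v t₀ - u w t₀ * deriv (u v) t₀) / (u v t₀)^2)) t₀ :=
      hψh.comp t₀ hr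
    have h2 : (fun t => ψ (u v t / u v t)) = fun _ => ψ 1 := by
      funext t; rw [div_self (hpos v t).ne']
    have h3 : HasDerivAt (fun t => ψ (u v t / u v t)) 0 t₀ := by
      rw [h2]; exact hasDerivAt_const _ _
    have h4 := h1.fun_sub h3
    refine h4.congr_deriv ?_
    rw [sub_zero, hheat w, hheat v]
    have hw := hfne w
    have hv := hfne v
    simp only [hf] at hw hv ⊢
    field_simp
  have hsum : HasDerivAt
      (fun t => ∑ w, if Adj v w then ψ (u w t / u v t) - ψ (u v t / u v t) else 0)
      (∑ w, if Adj v w then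
        deriv ψ (f w / f v) * (f w / f v) * (lap Adj f w / f w - lap Adj f v / f v)
        else 0) t₀ := by
    apply HasDerivAt.fun_sum
    intro w _
    by_cases h : Adj v w
    · simp only [h, if_true]; exact hinner w
    · simp only [h, if_false]; exact hasDerivAt_const _ _
  have heq : (∑ w, if Adj v w then
        deriv ψ (f w / f v) * (f w / f v) * (lap Adj f w / f w - lap Adj f v / f v)
        else 0) = omegaPsi Adj ψ f v := by
    unfold omegaPsi lap
    apply Finset.sum_congr rfl
    intro w _
    by_cases h : Adj v w <;> simp [h]
  have hG : HasDerivAt (fun t => psiLap Adj ψ (fun z => u z t) v)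
      (omegaPsi Adj ψ f v) t₀ := heq ▸ hsum
  have hF : HasDerivAt (fun t => u v t * psiLap Adj ψ (fun z => u z t) v)
      (lap Adj f v * psiLap Adj ψ f v + f v * omegaPsi Adj ψ f v) t₀ := by
    have h := (hdiff v).hasDerivAt.mul hG
    rw [hheat v] at h
    exact h
  have hderiv : deriv (fun t => -(u v t * psiLap Adj ψ (fun z => u z t) v)) t₀
      = -(lap Adj f v * psiLap Adj ψ f v + f v * omegaPsi Adj ψ f v) := hF.neg.deriv
  rw [hderiv]
  have hlapneg : lap Adj (fun w => -(f w * psiLap Adj ψ f w)) v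
      = - lap Adj (fun w => f w * psiLap Adj ψ f w) v := by
    unfold lap
    rw [← Finset.sum_neg_distrib]
    exact Finset.sum_congr rfl fun w _ => by split <;> ring
  rw [hlapneg]
  unfold gamma2Psi
  field_simp [hfne v]
  ring
end
end

section
/- A finite graph G satisfies the CDψ(d,0) inequality (Γ₂^ψ(f) ≥ (1/d)(Δ^ψ f)² for all positive f) if and only if every positive solution u of the heat equation on G satisfies 𝓛(−u·Δ^ψ u) ≥ (2/d)·u·(Δ^ψ u)². -/
noncomputable section

open Finset Filter

variable {V : Type*} [Fintype V]

lemma lap_neg (Adj : V → V → Prop) [DecidableRel Adj] (g : V → ℝ) (v : V) :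
    lap Adj (fun w => -g w) v = -lap Adj g v := by
  simp only [lap, ← Finset.sum_neg_distrib]
  exact Finset.sum_congr rfl fun w _ => by split <;> ring

lemma hasDerivAt_psiLap (Adj : V → V → Prop) [DecidableRel Adj] (ψ : ℝ → ℝ)
    (hψ : ContDiffOn ℝ 1 ψ (Set.Ioi 0)) (u : V → ℝ → ℝ) (t : ℝ)
    (hdiff : ∀ w, DifferentiableAt ℝ (u w) t) (hpos : ∀ w, 0 < u w t) (v : V) :
    HasDerivAt (fun s => psiLap Adj ψ (fun z => u z s) v)
      (∑ w, if Adj v w then deriv ψ (u w t / u v t) *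
        ((deriv (u w) t * u v t - u w t * deriv (u v) t) / u v t ^ 2) else 0) t := by
  have hker : ∀ x : ℝ, 0 < x → DifferentiableAt ℝ ψ x := fun x hx =>
    ((hψ.differentiableOn one_ne_zero).differentiableAt (Ioi_mem_nhds hx))
  have hmain : HasDerivAt (fun s => ∑ w, if Adj v w then
      ψ (u w s / u v s) - ψ (u v s / u v s) else 0)
      (∑ w, if Adj v w then deriv ψ (u w t / u v t) *
        ((deriv (u w) t * u v t - u w t * deriv (u v) t) / u v t ^ 2) else 0) t := by
    apply HasDerivAt.fun_sum
    intro w _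
    by_cases h : Adj v w
    · simp only [if_pos h]
      have hqw : HasDerivAt (fun s => u w s / u v s)
          ((deriv (u w) t * u v t - u w t * deriv (u v) t) / u v t ^ 2) t :=
        ((hdiff w).hasDerivAt).div ((hdiff v).hasDerivAt) (ne_of_gt (hpos v))
      have hqv : HasDerivAt (fun s => u v s / u v s)
          ((deriv (u v) t * u v t - u v t * deriv (u v) t) / u v t ^ 2) t :=
        ((hdiff v).hasDerivAt).div ((hdiff v).hasDerivAt) (ne_of_gt (hpos v))
      have h1 := ((hker _ (div_pos (hpos w) (hpos v))).hasDerivAt).comp t hqw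
      have h2 := ((hker _ (div_pos (hpos v) (hpos v))).hasDerivAt).comp t hqv
      have := h1.fun_sub h2
      convert this using 1
      · rfl
      ring
    · simp only [if_neg h]
      exact hasDerivAt_const t 0
  exact hmain

lemma heat_op_eq (Adj : V → V → Prop) [DecidableRel Adj] (ψ : ℝ → ℝ)
    (hψ : ContDiffOn ℝ 1 ψ (Set.Ioi 0)) (u : V → ℝ → ℝ) (t : ℝ)
    (hdiff : ∀ w, DifferentiableAt ℝ (u w) t) (hpos : ∀ w, 0 < u w t)
    (hheat : ∀ w, deriv (u w) t = lap Adj (fun z => u z t) w) (v : V) :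
    lap Adj (fun w => -(u w t * psiLap Adj ψ (fun z => u z t) w)) v
      - deriv (fun s => -(u v s * psiLap Adj ψ (fun z => u z s) v)) t
    = 2 * u v t * gamma2Psi Adj ψ (fun z => u z t) v := by
  set f : V → ℝ := fun z => u z t with hf
  have hP := hasDerivAt_psiLap Adj ψ hψ u t hdiff hpos v
  have homega : (∑ w, if Adj v w then deriv ψ (u w t / u v t) *
        ((deriv (u w) t * u v t - u w t * deriv (u v) t) / u v t ^ 2) else 0)
      = omegaPsi Adj ψ f v := by
    simp only [omegaPsi, lap, hheat]
    apply Finset.sum_congr rfl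
    intro w _
    by_cases h : Adj v w
    · simp only [if_pos h]
      have hfv := ne_of_gt (hpos v)
      have hfw := ne_of_gt (hpos w)
      generalize (∑ x, if Adj v x then f x - f v else 0) = A
      generalize (∑ x, if Adj w x then f x - f w else 0) = B
      simp only [hf]
      field_simp
      ring
    · simp only [if_neg h]
  rw [homega] at hP
  have hprod : HasDerivAt (fun s => u v s * psiLap Adj ψ (fun z => u z s) v)
      (deriv (u v) t * psiLap Adj ψ f v + u v t * omegaPsi Adj ψ f v) t :=
    ((hdiff v).hasDerivAt).mul hP
  have hderiv : deriv (fun s => -(u v s * psiLap Adj ψ (fun z => u z s) v)) t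
      = -(deriv (u v) t * psiLap Adj ψ f v + u v t * omegaPsi Adj ψ f v) :=
    hprod.neg.deriv
  rw [hderiv, hheat v, lap_neg Adj (fun w => f w * psiLap Adj ψ f w) v]
  have hfv := ne_of_gt (hpos v)
  simp only [gamma2Psi]
  simp only [hf]
  field_simp
  ring

def lapCLM (Adj : V → V → Prop) [DecidableRel Adj] : (V → ℝ) →L[ℝ] (V → ℝ) :=
  LinearMap.toContinuousLinearMap
    { toFun := fun f => lap Adj f
      map_add' := fun f g => by
        funext v
        simp only [lap, Pi.add_apply, ← Finset.sum_add_distrib]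
        exact Finset.sum_congr rfl fun w _ => by split <;> ring
      map_smul' := fun c f => by
        funext v
        simp only [lap, Pi.smul_apply, smul_eq_mul, RingHom.id_apply, Finset.mul_sum]
        exact Finset.sum_congr rfl fun w _ => by split <;> ring }

lemma lapCLM_apply (Adj : V → V → Prop) [DecidableRel Adj] (f : V → ℝ) (v : V) :
    lapCLM Adj f v = lap Adj f v := rfl

lemma exists_heat_solution (Adj : V → V → Prop) [DecidableRel Adj] (f : V → ℝ)
    (hf : ∀ v, 0 < f v) :
    ∃ u : V → ℝ → ℝ, (∀ v, Differentiable ℝ (u v)) ∧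
      (∀ v t, 0 ≤ t → 0 < u v t) ∧
      (∀ v t, 0 ≤ t → deriv (u v) t = lap Adj (fun w => u w t) v) ∧
      (∀ v, u v 0 = f v) := by
  classical
  set L : (V → ℝ) →L[ℝ] (V → ℝ) := lapCLM Adj with hL
  set c : ℝ := (Fintype.card V : ℝ) with hc
  set S : (V → ℝ) →L[ℝ] (V → ℝ) := L + c • (1 : (V → ℝ) →L[ℝ] (V → ℝ)) with hS
  -- S preserves nonnegativity
  have hSpos : ∀ g : V → ℝ, (∀ z, 0 ≤ g z) → ∀ z, 0 ≤ S g z := by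
    intro g hg z
    have hlap : (Finset.univ.filter (Adj z)).card * (0 - g z) ≤ lap Adj g z := by
      rw [show ((Finset.univ.filter (Adj z)).card : ℝ) * (0 - g z)
          = ∑ w ∈ Finset.univ.filter (Adj z), (0 - g z) by
        rw [Finset.sum_const, nsmul_eq_mul]]
      rw [Finset.sum_filter]
      simp only [lap]
      exact Finset.sum_le_sum fun w _ => by
        split
        · linarith [hg w]
        · exact le_rfl
    have hcard : ((Finset.univ.filter (Adj z)).card : ℝ) ≤ c := by
      rw [hc]
      exact_mod_cast Finset.card_filter_le _ _
    have : 0 ≤ lap Adj g z + c * g z := by nlinarith [hg z]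
    simpa [hS, hL, lapCLM_apply] using this
  have hpowpos : ∀ (t : ℝ), 0 ≤ t → ∀ (n : ℕ) (g : V → ℝ), (∀ z, 0 ≤ g z) →
      ∀ z, 0 ≤ ((t • S) ^ n) g z := by
    intro t ht n
    induction n with
    | zero => intro g hg z; simpa using hg z
    | succ n ih =>
      intro g hg z
      rw [pow_succ]
      have h1 : ∀ z, 0 ≤ (t • S) g z := by
        intro z
        have : (t • S) g z = t * S g z := rfl
        rw [this]
        exact mul_nonneg ht (hSpos g hg z)
      simpa [ContinuousLinearMap.mul_apply] using ih ((t • S) g) h1 z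
  set Φ : V → ((V → ℝ) →L[ℝ] (V → ℝ)) →L[ℝ] ℝ := fun w =>
    (ContinuousLinearMap.proj w).comp ((ContinuousLinearMap.apply ℝ (V → ℝ)) f) with hΦ
  have hE : ∀ (w : V) (t : ℝ), HasDerivAt (fun s => (NormedSpace.exp (s • S)) f w)
      ((NormedSpace.exp (t • S) * S) f w) t := by
    intro w t
    have h1 := hasDerivAt_exp_smul_const (𝕂 := ℝ) S t
    exact ((Φ w).hasFDerivAt.comp_hasDerivAt t h1 : _)
  have hexp_t : ∀ t : ℝ, HasDerivAt (fun s => Real.exp (-(c * s)))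
      (Real.exp (-(c * t)) * -c) t := by
    intro t
    have h0 : HasDerivAt (fun s : ℝ => -(c * s)) (-c) t := by
      have := ((hasDerivAt_id t).const_mul c).neg; rw [mul_one] at this; exact this
    exact (Real.hasDerivAt_exp _).comp t h0
  refine ⟨fun w s => Real.exp (-(c * s)) * (NormedSpace.exp (s • S)) f w, ?_, ?_, ?_, ?_⟩
  · intro w t
    exact ((hexp_t t).mul (hE w t)).differentiableAt
  · intro w t ht
    have hts : Summable (fun n : ℕ => ((Nat.factorial n : ℝ))⁻¹ • (t • S) ^ n) :=
      NormedSpace.expSeries_summable' (𝕂 := ℝ) (t • S)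
    have hsummap : Summable (fun n : ℕ => ((Nat.factorial n : ℝ))⁻¹ * (((t • S) ^ n) f w)) := by
      have h2 := hts.map ((Φ w).toLinearMap.toAddMonoidHom) (Φ w).continuous
      exact h2.congr fun n => by
        show Φ w (((Nat.factorial n : ℝ))⁻¹ • (t • S) ^ n) = _
        rw [map_smul]; rfl
    have hEf : NormedSpace.exp (t • S) f w
        = ∑' n : ℕ, ((Nat.factorial n : ℝ))⁻¹ * (((t • S) ^ n) f w) := by
      calc NormedSpace.exp (t • S) f w = Φ w (NormedSpace.exp (t • S)) := rfl
        _ = Φ w (∑' n : ℕ, ((Nat.factorial n : ℝ))⁻¹ • (t • S) ^ n) := by rw [NormedSpace.exp_eq_tsum ℝ]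
        _ = ∑' n : ℕ, Φ w (((Nat.factorial n : ℝ))⁻¹ • (t • S) ^ n) := (Φ w).map_tsum hts
        _ = ∑' n : ℕ, ((Nat.factorial n : ℝ))⁻¹ * (((t • S) ^ n) f w) := by
            exact tsum_congr fun n => by rw [map_smul]; rfl
    have hge : f w ≤ NormedSpace.exp (t • S) f w := by
      rw [hEf]
      have h3 := Summable.le_tsum hsummap 0 (fun j _ =>
        mul_nonneg (by positivity) (hpowpos t ht j f (fun z => (hf z).le) w))
      simpa using h3
    exact mul_pos (Real.exp_pos _) (lt_of_lt_of_le (hf w) hge)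
  · intro w t ht
    have hd := (hexp_t t).fun_mul (hE w t)
    rw [hd.deriv]
    have hcomm : S * NormedSpace.exp (t • S) = NormedSpace.exp (t • S) * S :=
      (((Commute.refl S).smul_right t).exp_right).eq
    have hfun : (fun z => Real.exp (-(c * t)) * (NormedSpace.exp (t • S)) f z)
        = Real.exp (-(c * t)) • ((NormedSpace.exp (t • S)) f) := rfl
    rw [hfun, show lap Adj (Real.exp (-(c * t)) • ((NormedSpace.exp (t • S)) f)) w
        = (L (Real.exp (-(c * t)) • ((NormedSpace.exp (t • S)) f))) w from rfl,
      map_smul]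
    have hLE : L ((NormedSpace.exp (t • S)) f)
        = (NormedSpace.exp (t • S) * S) f - c • ((NormedSpace.exp (t • S)) f) := by
      have : L = S - c • (1 : (V → ℝ) →L[ℝ] (V → ℝ)) := by rw [hS]; abel
      rw [this]
      simp only [ContinuousLinearMap.sub_apply, ContinuousLinearMap.smul_apply,
        ContinuousLinearMap.one_apply, ← ContinuousLinearMap.mul_apply, hcomm, one_mul,
        sub_mul, smul_mul_assoc]
    rw [hLE]
    simp only [Pi.smul_apply, Pi.sub_apply, smul_eq_mul]
    ring
  · intro w
    simp [NormedSpace.exp_zero]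

/-- Characterization of the `CDψ(d,0)` condition via positive solutions of the heat
equation. -/
theorem cdpsi_characterization (Adj : V → V → Prop) [DecidableRel Adj]
    (hsymm : Symmetric Adj) (hloop : ∀ v, ¬Adj v v)
    (ψ : ℝ → ℝ) (hψ : ContDiffOn ℝ 1 ψ (Set.Ioi 0)) (d : ℝ) (hd : 0 < d) :
    (∀ f : V → ℝ, (∀ v, 0 < f v) → ∀ v,
        gamma2Psi Adj ψ f v ≥ (1 / d) * (psiLap Adj ψ f v) ^ 2) ↔
    (∀ u : V → ℝ → ℝ, (∀ v, Differentiable ℝ (u v)) →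
        (∀ v t, 0 ≤ t → 0 < u v t) →
        (∀ v t, 0 ≤ t → deriv (u v) t = lap Adj (fun w => u w t) v) →
        ∀ v : V, ∀ t : ℝ, 0 ≤ t →
          lap Adj (fun w => -(u w t * psiLap Adj ψ (fun z => u z t) w)) v
            - deriv (fun s => -(u v s * psiLap Adj ψ (fun z => u z s) v)) t
          ≥ (2 / d) * u v t * (psiLap Adj ψ (fun z => u z t) v) ^ 2) := by


  constructor
  · intro H u hdiff hpos hheat v t ht
    rw [heat_op_eq Adj ψ hψ u t (fun w => (hdiff w) t) (fun w => hpos w t ht)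
      (fun w => hheat w t ht) v]
    have hγ := H (fun z => u z t) (fun w => hpos w t ht) v
    have ha : 0 < u v t := hpos v t ht
    have h2 : 2 * u v t * (1 / d * psiLap Adj ψ (fun z => u z t) v ^ 2)
        ≤ 2 * u v t * gamma2Psi Adj ψ (fun z => u z t) v :=
      mul_le_mul_of_nonneg_left hγ (by positivity)
    calc (2 / d) * u v t * psiLap Adj ψ (fun z => u z t) v ^ 2
        = 2 * u v t * (1 / d * psiLap Adj ψ (fun z => u z t) v ^ 2) := by ring
      _ ≤ 2 * u v t * gamma2Psi Adj ψ (fun z => u z t) v := h2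
  · intro H f hf v
    obtain ⟨u, hudiff, hupos, huheat, hu0⟩ := exists_heat_solution Adj f hf
    have hid := heat_op_eq Adj ψ hψ u 0 (fun w => (hudiff w) 0)
      (fun w => hupos w 0 le_rfl) (fun w => huheat w 0 le_rfl) v
    have hineq := H u hudiff hupos huheat v 0 le_rfl
    rw [hid] at hineq
    simp only [hu0] at hineq
    have ha : 0 < f v := hf v
    have h3 : 2 * f v * (1 / d * psiLap Adj ψ f v ^ 2) ≤ 2 * f v * gamma2Psi Adj ψ f v := by
      calc 2 * f v * (1 / d * psiLap Adj ψ f v ^ 2)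
          = 2 / d * f v * psiLap Adj ψ f v ^ 2 := by ring
        _ ≤ 2 * f v * gamma2Psi Adj ψ f v := hineq
    exact le_of_mul_le_mul_left h3 (by positivity)
end
end

section
/- On a finite graph, for ψ ∈ C²((0,∞)) and any f : V → ℝ, the pointwise limit lim_{ε→0} (1/ε²)·Γ^ψ(1+εf) = −ψ''(1)·Γ(f) holds, where Γ^ψ = Δ^{ψ̄} with ψ̄(x) = ψ'(1)(x−1) − (ψ(x)−ψ(1)) and Γ(f) = (Δ(f²) − 2fΔf)/2. -/
noncomputable section

open Finset Filter

variable {V : Type*} [Fintype V]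

private lemma psibar_core (ψ : ℝ → ℝ) (hψ : ContDiffOn ℝ 2 ψ (Set.Ioi 0)) :
    Tendsto (fun h : ℝ => psibar ψ (1+h) / h^2) (nhdsWithin 0 {0}ᶜ)
      (nhds (-(deriv (deriv ψ) 1)/2)) := by
  have hψ1 : ContDiffOn ℝ 1 (deriv ψ) (Set.Ioi 0) :=
    hψ.deriv_of_isOpen isOpen_Ioi (by norm_num)
  have hderiv2 : HasDerivAt (deriv ψ) (deriv (deriv ψ) 1) 1 := by
    have : DifferentiableAt ℝ (deriv ψ) 1 :=
      (hψ1.differentiableOn one_ne_zero).differentiableAt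
        (isOpen_Ioi.mem_nhds (by norm_num : (1:ℝ) ∈ Set.Ioi 0))
    exact this.hasDerivAt
  -- slope limit
  have hslope : Tendsto (fun h : ℝ => (deriv ψ (1+h) - deriv ψ 1) / h)
      (nhdsWithin 0 {0}ᶜ) (nhds (deriv (deriv ψ) 1)) := by
    have h1 : Tendsto (fun h : ℝ => 1 + h) (nhdsWithin 0 {0}ᶜ) (nhdsWithin 1 {1}ᶜ) := by
      apply tendsto_nhdsWithin_of_tendsto_nhds_of_eventually_within
      · have hco : Continuous fun h : ℝ => 1 + h := by continuity
        have := hco.tendsto 0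
        simp only [add_zero] at this
        exact this.mono_left nhdsWithin_le_nhds
      · filter_upwards [self_mem_nhdsWithin] with h hh
        simp only [Set.mem_compl_iff, Set.mem_singleton_iff] at hh ⊢
        intro hc; exact hh (by linarith)
    have := (hasDerivAt_iff_tendsto_slope.mp hderiv2).comp h1
    refine this.congr fun h => ?_
    simp [slope_def_field, add_sub_cancel_left]
  apply HasDerivAt.lhopital_zero_nhdsNE (f' := fun h => deriv ψ 1 - deriv ψ (1+h))
    (g' := fun h => 2*h)
  · -- eventually HasDerivAt f
    have hmem : ∀ᶠ h : ℝ in nhds 0, (0:ℝ) < 1 + h := by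
      have : Continuous fun h : ℝ => 1 + h := by continuity
      exact this.continuousAt.eventually (eventually_gt_nhds (by norm_num))
    apply eventually_nhdsWithin_of_eventually_nhds
    filter_upwards [hmem] with h hh
    have hdψ : DifferentiableAt ℝ ψ (1 + h) :=
      (hψ.differentiableOn (by norm_num)).differentiableAt (isOpen_Ioi.mem_nhds hh)
    have h1 : HasDerivAt (fun h : ℝ => ψ (1 + h)) (deriv ψ (1+h)) h := by
      have := hdψ.hasDerivAt.comp h ((hasDerivAt_const h (1:ℝ)).add (hasDerivAt_id h))
      simpa [Function.comp_def] using this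
    have h2 : HasDerivAt (fun h : ℝ => deriv ψ 1 * ((1+h) - 1) - (ψ (1+h) - ψ 1))
        (deriv ψ 1 * 1 - deriv ψ (1+h)) h := by
      have hl : HasDerivAt (fun h : ℝ => deriv ψ 1 * ((1+h)-1)) (deriv ψ 1 * 1) h := by
        have : HasDerivAt (fun h : ℝ => (1+h) - 1) 1 h := by
          simpa using ((hasDerivAt_const h (1:ℝ)).add (hasDerivAt_id h)).sub_const 1
        exact this.const_mul _
      exact hl.sub (h1.sub_const _)
    simpa [psibar, mul_one] using h2
  · apply eventually_nhdsWithin_of_eventually_nhds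
    filter_upwards with h
    simpa using (hasDerivAt_pow 2 h)
  · filter_upwards [self_mem_nhdsWithin] with h hh
    simp only [Set.mem_compl_iff, Set.mem_singleton_iff] at hh
    positivity
  · -- f → 0
    have hc : ContinuousAt ψ 1 :=
      (hψ.continuousOn.continuousAt (isOpen_Ioi.mem_nhds (by norm_num)))
    have hc2 : ContinuousAt (fun h : ℝ => ψ (1+h)) 0 := by
      exact ContinuousAt.comp (by simpa using hc) (by fun_prop)
    have hca : ContinuousAt (fun h : ℝ => psibar ψ (1+h)) 0 := by
      unfold psibar
      exact (continuousAt_const.mul (by fun_prop)).sub (hc2.sub continuousAt_const)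
    have := hca.tendsto
    simp only [add_zero] at this
    have h0 : psibar ψ 1 = 0 := by simp [psibar]
    rw [h0] at this
    exact this.mono_left nhdsWithin_le_nhds
  · have : Tendsto (fun h : ℝ => h^2) (nhds (0:ℝ)) (nhds 0) := by
      simpa using (continuous_pow 2).tendsto (0:ℝ)
    exact this.mono_left nhdsWithin_le_nhds
  · -- deriv ratio
    have := hslope.const_mul (-(1/2) : ℝ)
    have heq : ∀ h : ℝ, -(1/2) * ((deriv ψ (1+h) - deriv ψ 1) / h)
        = (deriv ψ 1 - deriv ψ (1+h)) / (2*h) := by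
      intro h; rcases eq_or_ne h 0 with rfl | hh
      · simp
      · first
        | (field_simp; ring)
        | field_simp
    refine Tendsto.congr (fun h => heq h) ?_
    convert this using 2
    ring

private lemma psibar_edge (ψ : ℝ → ℝ) (hψ : ContDiffOn ℝ 2 ψ (Set.Ioi 0)) (a b : ℝ) :
    Tendsto (fun ε : ℝ => (1/ε^2) * psibar ψ ((1+ε*a)/(1+ε*b)))
      (nhdsWithin 0 {0}ᶜ) (nhds (-(deriv (deriv ψ) 1)/2 * (a-b)^2)) := by
  have hb : ∀ᶠ ε : ℝ in nhds 0, 1 + ε * b ≠ 0 := by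
    have h1 : ContinuousAt (fun ε : ℝ => 1 + ε * b) 0 := by fun_prop
    have := h1.eventually_ne (y := 0) (by norm_num)
    simpa using this
  have hne : ∀ᶠ ε : ℝ in nhdsWithin 0 {0}ᶜ, ε ≠ 0 := by
    filter_upwards [self_mem_nhdsWithin] with ε hε
    simpa using hε
  rcases eq_or_ne a b with rfl | hab
  · have : ∀ᶠ ε : ℝ in nhdsWithin 0 {0}ᶜ,
        (0:ℝ) = (1/ε^2) * psibar ψ ((1+ε*a)/(1+ε*a)) := by
      filter_upwards [eventually_nhdsWithin_of_eventually_nhds hb] with ε hε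
      rw [div_self hε]
      simp [psibar]
    have h0 : Tendsto (fun _ : ℝ => (0:ℝ)) (nhdsWithin 0 {0}ᶜ)
        (nhds (-(deriv (deriv ψ) 1)/2 * (a-a)^2)) := by
      simpa using tendsto_const_nhds
    exact h0.congr' this
  · set c : ℝ → ℝ := fun ε => ε * (a-b) / (1 + ε * b) with hc
    have hc0 : Tendsto c (nhdsWithin 0 {0}ᶜ) (nhdsWithin 0 {0}ᶜ) := by
      apply tendsto_nhdsWithin_of_tendsto_nhds_of_eventually_within
      · have hca : ContinuousAt c 0 := by
          apply ContinuousAt.div (by fun_prop) (by fun_prop)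
          norm_num
        have := hca.tendsto
        simp only [hc] at this ⊢
        simpa using this.mono_left nhdsWithin_le_nhds
      · filter_upwards [eventually_nhdsWithin_of_eventually_nhds hb, hne] with ε hεb hε
        simp only [Set.mem_compl_iff, Set.mem_singleton_iff, hc]
        exact div_ne_zero (mul_ne_zero hε (sub_ne_zero.mpr hab)) hεb
    have hfac1 : Tendsto (fun ε : ℝ => psibar ψ (1 + c ε) / (c ε)^2)
        (nhdsWithin 0 {0}ᶜ) (nhds (-(deriv (deriv ψ) 1)/2)) :=
      (psibar_core ψ hψ).comp hc0
    have hfac2 : Tendsto (fun ε : ℝ => ((a-b)/(1+ε*b))^2)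
        (nhdsWithin 0 {0}ᶜ) (nhds ((a-b)^2)) := by
      have hca : ContinuousAt (fun ε : ℝ => ((a-b)/(1+ε*b))^2) 0 := by
        apply ContinuousAt.pow
        apply ContinuousAt.div (by fun_prop) (by fun_prop)
        norm_num
      have := hca.tendsto
      norm_num at this
      exact this.mono_left nhdsWithin_le_nhds
    have hmul := hfac1.mul hfac2
    apply hmul.congr'
    filter_upwards [eventually_nhdsWithin_of_eventually_nhds hb, hne] with ε hεb hε
    have hcε : c ε ≠ 0 := div_ne_zero (mul_ne_zero hε (sub_ne_zero.mpr hab)) hεb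
    have hx : (1+ε*a)/(1+ε*b) = 1 + c ε := by
      simp only [hc]
      field_simp
      ring
    rw [hx]
    set P := psibar ψ (1 + c ε) with hP
    have hab' : a - b ≠ 0 := sub_ne_zero.mpr hab
    simp only [hc] at hcε ⊢
    field_simp


private lemma gammaF_eq_sum (Adj : V → V → Prop) [DecidableRel Adj] (f : V → ℝ) (v : V) :
    gammaF Adj f v = (∑ w, if Adj v w then (f w - f v)^2 else 0) / 2 := by
  unfold gammaF lap
  congr 1
  rw [Finset.mul_sum, ← Finset.sum_sub_distrib]
  refine Finset.sum_congr rfl fun w _ => ?_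
  split_ifs <;> ring

/-- Limit of the ψ-gradient: `(1/ε²)·Γ^ψ(1+εf) → −ψ''(1)·Γ(f)` as `ε → 0`. -/
theorem gammaPsi_limit (Adj : V → V → Prop) [DecidableRel Adj]
    (hsymm : Symmetric Adj) (hloop : ∀ v, ¬Adj v v)
    (ψ : ℝ → ℝ) (hψ : ContDiffOn ℝ 2 ψ (Set.Ioi 0))
    (f : V → ℝ) (v : V) :
    Tendsto (fun ε : ℝ => (1 / ε ^ 2) * gammaPsi Adj ψ (fun w => 1 + ε * f w) v)
      (nhdsWithin 0 {0}ᶜ) (nhds (-(deriv (deriv ψ) 1) * gammaF Adj f v)) := by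
  set D2 := deriv (deriv ψ) with hD2
  have hb : ∀ᶠ ε : ℝ in nhds 0, 1 + ε * f v ≠ 0 := by
    have h1 : ContinuousAt (fun ε : ℝ => 1 + ε * f v) 0 := by fun_prop
    have := h1.eventually_ne (y := 0) (by norm_num)
    simpa using this
  have key : ∀ᶠ ε : ℝ in nhdsWithin 0 {0}ᶜ,
      (∑ w, if Adj v w then (1/ε^2) * psibar ψ ((1+ε*f w)/(1+ε*f v)) else 0)
        = (1 / ε ^ 2) * gammaPsi Adj ψ (fun w => 1 + ε * f w) v := by
    filter_upwards [eventually_nhdsWithin_of_eventually_nhds hb] with ε hε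
    unfold gammaPsi lap
    rw [Finset.mul_sum]
    refine Finset.sum_congr rfl fun w _ => ?_
    rw [mul_ite, mul_zero]
    rcases em (Adj v w) with h | h
    · simp only [h, if_true]
      rw [div_self hε]
      simp [psibar]
    · simp [h]
  have hsum : -D2 1 * gammaF Adj f v
      = ∑ w, if Adj v w then -D2 1 / 2 * (f w - f v)^2 else 0 := by
    rw [gammaF_eq_sum, ← mul_div_assoc, Finset.mul_sum, Finset.sum_div]
    refine Finset.sum_congr rfl fun w _ => ?_
    split_ifs <;> ring
  rw [hsum]
  refine Tendsto.congr' key ?_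
  apply tendsto_finset_sum
  intro w _
  rcases em (Adj v w) with h | h
  · simp only [h, if_true]
    exact psibar_edge ψ hψ (f w) (f v)
  · simp only [h, if_false]
    exact tendsto_const_nhds
end
end

section
/- If a finite graph G satisfies CDψ(d,0) for some concave ψ ∈ C²((0,∞)) with ψ'(1) ≠ 0 and ψ''(1) ≠ 0, then G satisfies the classical curvature-dimension condition CD(d', 0) with d' = (−ψ''(1)/ψ'(1)²)·d, i.e. Γ₂(f) ≥ (1/d')(Δf)² for all f : V → ℝ. -/
noncomputable section

open Finset Filter Topology

variable {V : Type*} [Fintype V]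

namespace CDaux

/-! ### One-variable analytic auxiliaries -/

/-- Peano remainder in the second-order expansion of `ψ` at `1`. -/
def eFun (ψ : ℝ → ℝ) (h : ℝ) : ℝ :=
  if h = 0 then 0
  else (ψ (1+h) - ψ 1 - deriv ψ 1 * h - deriv (deriv ψ) 1 / 2 * h^2) / h^2

lemma eFun_spec (ψ : ℝ → ℝ) (h : ℝ) :
    ψ (1+h) = ψ 1 + deriv ψ 1 * h + (deriv (deriv ψ) 1 / 2 + eFun ψ h) * h^2 := by
  unfold eFun; split_ifs with hh
  · simp [hh]
  · field_simp; ring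

/-- Slope-quotient of `x ↦ x·ψ'(x)` at `1`. -/
def qFun (ψ : ℝ → ℝ) (x : ℝ) : ℝ :=
  if x = 1 then deriv ψ 1 + deriv (deriv ψ) 1
  else (x * deriv ψ x - deriv ψ 1) / (x - 1)

lemma qFun_spec (ψ : ℝ → ℝ) (x : ℝ) :
    x * deriv ψ x = deriv ψ 1 + qFun ψ x * (x - 1) := by
  unfold qFun; split_ifs with hx
  · simp [hx]
  · have : x - 1 ≠ 0 := sub_ne_zero.2 hx
    field_simp
    ring

section Analytic
variable (ψ : ℝ → ℝ) (hψ : ContDiffOn ℝ 2 ψ (Set.Ioi 0))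
include hψ

lemma hasDerivAt_deriv : HasDerivAt (deriv ψ) (deriv (deriv ψ) 1) 1 := by
  have h1 : (1:ℝ) ∈ Set.Ioi (0:ℝ) := by norm_num
  have hd : ContDiffOn ℝ 1 (deriv ψ) (Set.Ioi 0) :=
    hψ.deriv_of_isOpen isOpen_Ioi (by norm_num)
  exact ((hd.differentiableOn (by norm_num)).differentiableAt
    (isOpen_Ioi.mem_nhds h1)).hasDerivAt

lemma qFun_tendsto :
    Tendsto (qFun ψ) (𝓝 1) (𝓝 (deriv ψ 1 + deriv (deriv ψ) 1)) := by
  have hm : HasDerivAt (fun x => x * deriv ψ x) (1 * deriv ψ 1 + 1 * deriv (deriv ψ) 1) 1 := by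
    exact (hasDerivAt_id' 1).mul (hasDerivAt_deriv ψ hψ)
  have hs : Tendsto (slope (fun x => x * deriv ψ x) 1) (𝓝[≠] 1)
      (𝓝 (1 * deriv ψ 1 + 1 * deriv (deriv ψ) 1)) :=
    hasDerivAt_iff_tendsto_slope.1 hm
  have heq : ∀ x ∈ ({1}ᶜ : Set ℝ), slope (fun x => x * deriv ψ x) 1 x = qFun ψ x := by
    intro x hx
    have hx1 : x ≠ 1 := hx
    simp [slope, qFun, hx1, div_eq_mul_inv, one_mul, mul_comm]
  have h2 : Tendsto (qFun ψ) (𝓝[≠] 1) (𝓝 (deriv ψ 1 + deriv (deriv ψ) 1)) := by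
    have := hs.congr' (eventually_nhdsWithin_of_forall heq)
    simpa [one_mul, mul_one, add_comm] using this
  have h3 : Tendsto (qFun ψ) (pure 1) (𝓝 (deriv ψ 1 + deriv (deriv ψ) 1)) := by
    simp [qFun, tendsto_pure_left]
    intro s hs'
    simpa [qFun] using mem_of_mem_nhds hs'
  have : 𝓝[≠] (1:ℝ) ⊔ pure 1 = 𝓝 1 := nhdsNE_sup_pure 1
  rw [← this]
  exact tendsto_sup.2 ⟨h2, h3⟩

lemma eFun_tendsto : Tendsto (eFun ψ) (𝓝 0) (𝓝 0) := by
  set a := deriv ψ 1 with ha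
  set b := deriv (deriv ψ) 1 with hb
  set F : ℝ → ℝ := fun h => ψ (1+h) - ψ 1 - a * h - b/2 * h^2 with hF
  set F' : ℝ → ℝ := fun t => deriv ψ (1+t) - a - b * t with hF'
  have hder : ∀ t : ℝ, |t| < 1 → HasDerivAt F (F' t) t := by
    intro t ht
    have hpos : (0:ℝ) < 1 + t := by cases abs_lt.1 ht; linarith
    have hdiff : DifferentiableAt ℝ ψ (1+t) :=
      ((hψ.differentiableOn (by norm_num))).differentiableAt
        (isOpen_Ioi.mem_nhds hpos)
    have h1 : HasDerivAt (fun h : ℝ => ψ (1+h)) (deriv ψ (1+t)) t := by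
      have := (hdiff.hasDerivAt).comp t ((hasDerivAt_id t).const_add 1)
      rw [mul_one] at this
      exact this
    have h2 : HasDerivAt (fun h : ℝ => ψ 1 + a * h + b/2 * h^2)
        (a + b/2 * (2 * t)) t := by
      have : HasDerivAt (fun h : ℝ => h^2) (2*t) t := by
        simpa using (hasDerivAt_pow 2 t)
      have h3 := ((hasDerivAt_const t (ψ 1)).add ((hasDerivAt_id t).const_mul a)).add
        (this.const_mul (b/2))
      rw [show a + b/2 * (2 * t) = 0 + a * 1 + b/2 * (2 * t) by ring]
      exact h3
    have := h1.sub h2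
    have e1 : F = fun h => ψ (1+h) - (ψ 1 + a * h + b/2 * h^2) := by
      funext h; simp only [hF]; ring
    have e2 : F' t = deriv ψ (1+t) - (a + b/2 * (2 * t)) := by
      simp only [hF']; ring
    rw [e1, e2]
    exact this
  have hslope : Tendsto (fun t => F' t / t) (𝓝[≠] 0) (𝓝 0) := by
    have hφ := hasDerivAt_deriv ψ hψ
    have h0 : Tendsto (fun x : ℝ => 1 + x) (𝓝[≠] (0:ℝ)) (𝓝[≠] (1:ℝ)) := by
      apply tendsto_nhdsWithin_of_tendsto_nhds_of_eventually_within
      · have h4 : Tendsto (fun x : ℝ => 1 + x) (𝓝 0) (𝓝 (1+0)) :=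
          (continuous_const.add continuous_id).tendsto 0
        simpa using h4.mono_left nhdsWithin_le_nhds
      · filter_upwards [eventually_mem_nhdsWithin] with x hx
        simpa using hx
    have hs : Tendsto (fun t : ℝ => (deriv ψ (1+t) - a) / t) (𝓝[≠] 0) (𝓝 b) := by
      have := (hasDerivAt_iff_tendsto_slope.1 hφ).comp h0
      apply this.congr
      intro t
      simp [slope, Function.comp, div_eq_mul_inv, mul_comm]
      exact Or.inl ha.symm
    have := hs.sub (tendsto_const_nhds (x := b))
    simp only [sub_self] at this
    apply this.congr'
    filter_upwards [eventually_mem_nhdsWithin] with t (ht : t ≠ 0)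
    field_simp [hF']
    ring
  rw [NormedAddCommGroup.tendsto_nhds_zero]
  intro δ hδ
  have hev : ∀ᶠ t in 𝓝[≠] (0:ℝ), |F' t / t| < δ/2 := by
    have := hslope
    rw [NormedAddCommGroup.tendsto_nhds_zero] at this
    exact this (δ/2) (by linarith)
  rw [eventually_nhdsWithin_iff, Metric.eventually_nhds_iff] at hev
  obtain ⟨r, hr, hrb⟩ := hev
  set r' := min r 1 with hr'
  have hr'0 : 0 < r' := lt_min hr one_pos
  have hbound : ∀ t : ℝ, |t| < r' → |F' t| ≤ δ/2 * |t| := by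
    intro t ht
    rcases eq_or_ne t 0 with rfl | ht0
    · simp [hF', ha]
    · have h1 : dist t 0 < r := by
        rw [Real.dist_eq, sub_zero]; exact ht.trans_le (min_le_left _ _)
      have := hrb h1 (by simpa using ht0)
      rw [abs_div] at this
      have habs : 0 < |t| := abs_pos.2 ht0
      calc |F' t| = |F' t| / |t| * |t| := by field_simp
        _ ≤ δ/2 * |t| := by
            apply mul_le_mul_of_nonneg_right (le_of_lt this) (abs_nonneg t)
  have key : ∀ h : ℝ, h ≠ 0 → |h| < r' → |F h / h^2| ≤ δ/2 := by
    intro h hne hlt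
    have hseg : ∀ t ∈ Set.uIcc (0:ℝ) h, |t| ≤ |h| := by
      intro t ht
      rw [Set.uIcc_eq_union] at ht
      rcases ht with ht | ht <;> rw [Set.mem_Icc] at ht <;> rw [abs_le] <;>
        constructor <;> linarith [neg_abs_le h, le_abs_self h, abs_nonneg h]
    have hderseg : ∀ t ∈ Set.uIcc (0:ℝ) h, HasDerivWithinAt F (F' t) (Set.uIcc 0 h) t := by
      intro t ht
      have : |t| < 1 := lt_of_le_of_lt (hseg t ht) (hlt.trans_le (min_le_right _ _))
      exact (hder t this).hasDerivWithinAt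
    have hC : ∀ t ∈ Set.uIcc (0:ℝ) h, ‖F' t‖ ≤ δ/2 * |h| := by
      intro t ht
      have h1 : |t| < r' := lt_of_le_of_lt (hseg t ht) hlt
      calc ‖F' t‖ = |F' t| := rfl
        _ ≤ δ/2 * |t| := hbound t h1
        _ ≤ δ/2 * |h| := by
            apply mul_le_mul_of_nonneg_left (hseg t ht) (by linarith)
    have := (convex_uIcc (0:ℝ) h).norm_image_sub_le_of_norm_hasDerivWithin_le
      hderseg hC Set.left_mem_uIcc Set.right_mem_uIcc
    have hF0 : F 0 = 0 := by simp [hF]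
    rw [hF0, sub_zero, sub_zero, Real.norm_eq_abs, Real.norm_eq_abs] at this
    have h2 : |F h| ≤ δ/2 * h^2 := by
      calc |F h| ≤ δ/2 * |h| * |h| := this
        _ = δ/2 * h^2 := by rw [mul_assoc, ← abs_mul, ← pow_two, abs_of_nonneg (sq_nonneg h)]
    rw [abs_div]
    rw [div_le_iff₀ (by positivity)]
    calc |F h| ≤ δ/2 * h^2 := h2
      _ = δ/2 * |h^2| := by rw [abs_of_nonneg (sq_nonneg h)]
  have : ∀ᶠ h in 𝓝 (0:ℝ), |h| < r' := by
    have := Metric.ball_mem_nhds (0:ℝ) hr'0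
    filter_upwards [this] with x hx
    simpa [Real.dist_eq] using hx
  filter_upwards [this] with h hh
  rcases eq_or_ne h 0 with rfl | hne
  · simpa [eFun] using hδ
  · have : eFun ψ h = F h / h^2 := by simp [eFun, hne, hF, ha, hb]
    rw [this, Real.norm_eq_abs]
    exact lt_of_le_of_lt (key h hne hh) (by linarith)

end Analytic

/-! ### Graph-side auxiliaries -/

variable (Adj : V → V → Prop) [DecidableRel Adj]

/-- Perturbation `g_ε = 1 + ε f`. -/
def gg (f : V → ℝ) (ε : ℝ) (u : V) : ℝ := 1 + ε * f u

lemma lap_gg (f : V → ℝ) (ε : ℝ) (u : V) :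
    lap Adj (gg f ε) u = ε * lap Adj f u := by
  unfold lap gg
  rw [Finset.mul_sum]
  exact Finset.sum_congr rfl fun x _ => by split_ifs <;> ring

lemma gammaF_eq (f : V → ℝ) (u : V) :
    gammaF Adj f u = (∑ x, if Adj u x then (f x - f u)^2 else 0) / 2 := by
  have key : lap Adj (fun w => f w * f w) u - 2 * f u * lap Adj f u
      = ∑ x, if Adj u x then (f x - f u)^2 else 0 := by
    simp only [lap]
    rw [Finset.mul_sum, ← Finset.sum_sub_distrib]
    refine Finset.sum_congr rfl fun x _ => ?_
    split_ifs <;> ring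
  unfold gammaF
  rw [key]

lemma algId (f : V → ℝ) (a b : ℝ) (v : V) :
    (∑ w, if Adj v w then
        (a * lap Adj f w * (f v - f w)
          + (a + b) * (f w - f v) * (lap Adj f w - lap Adj f v)
          - b * (gammaF Adj f w - gammaF Adj f v)) else 0)
      + a * (lap Adj f v)^2 = -2 * b * gamma2F Adj f v := by
  set L := lap Adj f with hLdef
  set G := gammaF Adj f with hGdef
  have hL : a * (L v)^2 = ∑ w, if Adj v w then a * L v * (f w - f v) else 0 := by
    have h2 : (∑ w, if Adj v w then a * L v * (f w - f v) else 0)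
        = a * L v * ∑ w, if Adj v w then f w - f v else 0 := by
      rw [Finset.mul_sum]
      exact Finset.sum_congr rfl fun x _ => by split_ifs <;> ring
    rw [h2, show (∑ w, if Adj v w then f w - f v else 0) = L v from rfl]
    ring
  rw [hL, ← Finset.sum_add_distrib]
  have claim1 : (∑ w, ((if Adj v w then
        (a * L w * (f v - f w) + (a + b) * (f w - f v) * (L w - L v)
          - b * (G w - G v)) else 0) + if Adj v w then a * L v * (f w - f v) else 0))
      = ∑ w, if Adj v w then
          (b * (f w - f v) * (L w - L v) - b * (G w - G v)) else 0 := by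
    refine Finset.sum_congr rfl fun x _ => ?_
    split_ifs <;> ring
  rw [claim1]
  have split : (∑ w, if Adj v w then
          (b * (f w - f v) * (L w - L v) - b * (G w - G v)) else 0)
      = -b * (∑ w, if Adj v w then G w - G v else 0)
        + b * (∑ w, if Adj v w then f w * L w - f v * L v else 0)
        - b * f v * (∑ w, if Adj v w then L w - L v else 0)
        - b * L v * (∑ w, if Adj v w then f w - f v else 0) := by
    rw [Finset.mul_sum, Finset.mul_sum, Finset.mul_sum, Finset.mul_sum,
      ← Finset.sum_add_distrib, ← Finset.sum_sub_distrib, ← Finset.sum_sub_distrib]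
    refine Finset.sum_congr rfl fun x _ => ?_
    split_ifs <;> ring
  rw [split]
  unfold gamma2F gammaBil
  rw [← hLdef, ← hGdef]
  simp only [lap]
  rw [show (L v * L v : ℝ) = L v * ∑ w, if Adj v w then f w - f v else 0 from rfl]
  ring

/-- Second-order coefficient function. -/
def KK (ψ : ℝ → ℝ) (f : V → ℝ) (ε : ℝ) (u : V) : ℝ :=
  ∑ x, if Adj u x then
    (deriv (deriv ψ) 1 / 2 + eFun ψ (ε * (f x - f u) / gg f ε u))
      * ((f x - f u) / gg f ε u)^2 else 0

/-- Normalized ψ-Laplacian `Δ^ψ(g_ε)/ε`. -/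
def PP (ψ : ℝ → ℝ) (f : V → ℝ) (ε : ℝ) (u : V) : ℝ :=
  deriv ψ 1 * lap Adj f u / gg f ε u + ε * KK Adj ψ f ε u

lemma psiLap_eq (ψ : ℝ → ℝ) (f : V → ℝ) (ε : ℝ) (u : V) (hu : gg f ε u ≠ 0) :
    psiLap Adj ψ (gg f ε) u = ε * PP Adj ψ f ε u := by
  have key : ∀ x, gg f ε x / gg f ε u = 1 + ε * (f x - f u) / gg f ε u := by
    intro x
    have h2 : (1:ℝ) + ε * (f x - f u) / gg f ε u
        = (gg f ε u + ε * (f x - f u)) / gg f ε u := by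
      rw [add_div, div_self hu]
    rw [h2]
    congr 1
    unfold gg; ring
  unfold psiLap lap
  have step1 : (∑ x, if Adj u x then ψ (gg f ε x / gg f ε u) - ψ (gg f ε u / gg f ε u) else 0)
      = ∑ x, if Adj u x then
          (deriv ψ 1 * (ε * (f x - f u) / gg f ε u)
            + (deriv (deriv ψ) 1 / 2 + eFun ψ (ε * (f x - f u) / gg f ε u))
              * (ε * (f x - f u) / gg f ε u)^2) else 0 := by
    refine Finset.sum_congr rfl fun x _ => ?_
    split_ifs with h
    · rw [key x, div_self hu, eFun_spec ψ (ε * (f x - f u) / gg f ε u)]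
      ring
    · rfl
  rw [step1]
  unfold PP
  rw [mul_add]
  have step2 : (∑ x, if Adj u x then
          (deriv ψ 1 * (ε * (f x - f u) / gg f ε u)
            + (deriv (deriv ψ) 1 / 2 + eFun ψ (ε * (f x - f u) / gg f ε u))
              * (ε * (f x - f u) / gg f ε u)^2) else 0)
      = (∑ x, if Adj u x then deriv ψ 1 * (ε * (f x - f u) / gg f ε u) else 0)
        + ∑ x, if Adj u x then (deriv (deriv ψ) 1 / 2 + eFun ψ (ε * (f x - f u) / gg f ε u))
              * (ε * (f x - f u) / gg f ε u)^2 else 0 := by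
    rw [← Finset.sum_add_distrib]
    exact Finset.sum_congr rfl fun x _ => by split_ifs <;> ring
  rw [step2]
  congr 1
  · have : ε * (deriv ψ 1 * lap Adj f u / gg f ε u)
        = deriv ψ 1 * ε / gg f ε u * ∑ x, if Adj u x then f x - f u else 0 := by
      rw [show (∑ x, if Adj u x then f x - f u else 0) = lap Adj f u from rfl]
      ring
    rw [this, Finset.mul_sum]
    exact Finset.sum_congr rfl fun x _ => by split_ifs <;> [field_simp; skip] <;> ring
  · unfold KK
    rw [Finset.mul_sum, Finset.mul_sum]
    refine Finset.sum_congr rfl fun x _ => ?_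
    split_ifs <;> [ring; simp]

/-- Normalized `2Γ₂^ψ(g_ε)/ε²`. -/
def NN (ψ : ℝ → ℝ) (f : V → ℝ) (ε : ℝ) (v : V) : ℝ :=
  (∑ w, if Adj v w then
     (deriv ψ 1 * lap Adj f w * (f v - f w) / (gg f ε w * gg f ε v)
      + qFun ψ (gg f ε w / gg f ε v) * (f w - f v)
          * (lap Adj f w / gg f ε w - lap Adj f v / gg f ε v) / gg f ε v
      - (gg f ε w * KK Adj ψ f ε w - gg f ε v * KK Adj ψ f ε v) / gg f ε v)
    else 0)
  + lap Adj f v * PP Adj ψ f ε v / gg f ε v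

lemma ratio_eq (f : V → ℝ) (ε : ℝ) (u w : V) (hu : gg f ε u ≠ 0) :
    gg f ε w / gg f ε u = 1 + ε * (f w - f u) / gg f ε u := by
  have h2 : (1:ℝ) + ε * (f w - f u) / gg f ε u
      = (gg f ε u + ε * (f w - f u)) / gg f ε u := by
    rw [add_div, div_self hu]
  rw [h2]
  congr 1
  unfold gg; ring

lemma main_eq (ψ : ℝ → ℝ) (f : V → ℝ) (ε : ℝ) (v : V) (hg : ∀ u, gg f ε u ≠ 0) :
    2 * gamma2Psi Adj ψ (gg f ε) v = ε^2 * NN Adj ψ f ε v := by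
  have h0 : 2 * gamma2Psi Adj ψ (gg f ε) v
      = omegaPsi Adj ψ (gg f ε) v
        + lap Adj (gg f ε) v * psiLap Adj ψ (gg f ε) v / gg f ε v
        - lap Adj (fun w => gg f ε w * psiLap Adj ψ (gg f ε) w) v / gg f ε v := by
    unfold gamma2Psi; ring
  rw [h0]
  have hA : omegaPsi Adj ψ (gg f ε) v
      = ∑ w, if Adj v w then
          (deriv ψ 1 + qFun ψ (gg f ε w / gg f ε v) * (ε * (f w - f v) / gg f ε v))
            * (ε * lap Adj f w / gg f ε w - ε * lap Adj f v / gg f ε v) else 0 := by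
    unfold omegaPsi
    simp only [lap]
    refine Finset.sum_congr rfl fun w _ => ?_
    split_ifs with h
    · have hXv : deriv ψ (gg f ε v / gg f ε v) * (gg f ε v / gg f ε v) *
          ((∑ x, if Adj v x then gg f ε x - gg f ε v else 0) / gg f ε v
            - (∑ x, if Adj v x then gg f ε x - gg f ε v else 0) / gg f ε v) = 0 := by
        rw [sub_self, mul_zero]
      rw [hXv, sub_zero]
      have hlw : (∑ x, if Adj w x then gg f ε x - gg f ε w else 0)
          = ε * ∑ x, if Adj w x then f x - f w else 0 := lap_gg Adj f ε w
      have hlv : (∑ x, if Adj v x then gg f ε x - gg f ε v else 0)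
          = ε * ∑ x, if Adj v x then f x - f v else 0 := lap_gg Adj f ε v
      rw [hlw, hlv]
      rw [mul_comm (deriv ψ (gg f ε w / gg f ε v)) (gg f ε w / gg f ε v)]
      rw [qFun_spec ψ (gg f ε w / gg f ε v)]
      rw [ratio_eq f ε v w (hg v), add_sub_cancel_left]
    · rfl
  have hB : lap Adj (fun w => gg f ε w * psiLap Adj ψ (gg f ε) w) v
      = ∑ w, if Adj v w then
          gg f ε w * (ε * PP Adj ψ f ε w) - gg f ε v * (ε * PP Adj ψ f ε v) else 0 := by
    simp only [lap]
    refine Finset.sum_congr rfl fun w _ => ?_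
    split_ifs with h
    · rw [psiLap_eq Adj ψ f ε w (hg w), psiLap_eq Adj ψ f ε v (hg v)]
    · rfl
  rw [hA, hB, lap_gg Adj f ε v, psiLap_eq Adj ψ f ε v (hg v)]
  rw [Finset.sum_div, add_sub_right_comm, ← Finset.sum_sub_distrib]
  have hmain : (∑ w, ((if Adj v w then
          (deriv ψ 1 + qFun ψ (gg f ε w / gg f ε v) * (ε * (f w - f v) / gg f ε v))
            * (ε * lap Adj f w / gg f ε w - ε * lap Adj f v / gg f ε v) else 0)
        - (if Adj v w then
            gg f ε w * (ε * PP Adj ψ f ε w) - gg f ε v * (ε * PP Adj ψ f ε v) else 0)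
            / gg f ε v))
      = ε^2 * ∑ w, if Adj v w then
         (deriv ψ 1 * lap Adj f w * (f v - f w) / (gg f ε w * gg f ε v)
          + qFun ψ (gg f ε w / gg f ε v) * (f w - f v)
              * (lap Adj f w / gg f ε w - lap Adj f v / gg f ε v) / gg f ε v
          - (gg f ε w * KK Adj ψ f ε w - gg f ε v * KK Adj ψ f ε v) / gg f ε v)
        else 0 := by
    rw [Finset.mul_sum]
    refine Finset.sum_congr rfl fun w _ => ?_
    split_ifs with h
    · unfold PP
      generalize qFun ψ (gg f ε w / gg f ε v) = Q
      generalize KK Adj ψ f ε w = Kw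
      generalize KK Adj ψ f ε v = Kv
      have hG := hg w
      have hH := hg v
      have hrel : gg f ε w = gg f ε v + ε * (f w - f v) := by unfold gg; ring
      rw [hrel] at hG ⊢
      generalize gg f ε v = H at hH hG ⊢
      field_simp
      ring
    · simp
  rw [hmain]
  unfold NN
  ring

/-! ### Limits -/

lemma gg_tendsto (f : V → ℝ) (u : V) :
    Tendsto (fun ε => gg f ε u) (𝓝 0) (𝓝 1) := by
  have h : Tendsto (fun ε : ℝ => 1 + ε * f u) (𝓝 0) (𝓝 (1 + 0 * f u)) :=
    (continuous_const.add (continuous_id.mul continuous_const)).tendsto 0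
  simpa [gg] using h

lemma KK_tendsto (ψ : ℝ → ℝ) (hψ : ContDiffOn ℝ 2 ψ (Set.Ioi 0)) (f : V → ℝ) (u : V) :
    Tendsto (fun ε => KK Adj ψ f ε u) (𝓝 0)
      (𝓝 (deriv (deriv ψ) 1 * gammaF Adj f u)) := by
  have htarget : deriv (deriv ψ) 1 * gammaF Adj f u
      = ∑ x, if Adj u x then deriv (deriv ψ) 1 / 2 * (f x - f u)^2 else 0 := by
    rw [gammaF_eq, show deriv (deriv ψ) 1 * ((∑ x, if Adj u x then (f x - f u)^2 else 0) / 2)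
      = (deriv (deriv ψ) 1 / 2) * ∑ x, if Adj u x then (f x - f u)^2 else 0 from by ring,
      Finset.mul_sum]
    exact Finset.sum_congr rfl fun x _ => by split_ifs <;> ring
  rw [htarget]
  unfold KK
  apply tendsto_finset_sum
  intro x _
  by_cases hax : Adj u x
  · simp only [if_pos hax]
    have hinner : Tendsto (fun ε => ε * (f x - f u) / gg f ε u) (𝓝 0) (𝓝 0) := by
      have := (tendsto_id.mul (tendsto_const_nhds (x := f x - f u))).div
        (gg_tendsto f u) one_ne_zero
      rw [zero_mul, zero_div] at this
      exact this
    have he : Tendsto (fun ε => eFun ψ (ε * (f x - f u) / gg f ε u)) (𝓝 0) (𝓝 0) :=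
      (eFun_tendsto ψ hψ).comp hinner
    have hq : Tendsto (fun ε => ((f x - f u) / gg f ε u)^2) (𝓝 0)
        (𝓝 (((f x - f u) / 1)^2)) :=
      ((tendsto_const_nhds.div (gg_tendsto f u) one_ne_zero)).pow 2
    have := ((tendsto_const_nhds (x := deriv (deriv ψ) 1 / 2)).add he).mul hq
    simpa using this
  · simp only [if_neg hax]
    exact tendsto_const_nhds

lemma PP_tendsto (ψ : ℝ → ℝ) (hψ : ContDiffOn ℝ 2 ψ (Set.Ioi 0)) (f : V → ℝ) (u : V) :
    Tendsto (fun ε => PP Adj ψ f ε u) (𝓝 0) (𝓝 (deriv ψ 1 * lap Adj f u)) := by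
  unfold PP
  have h1 : Tendsto (fun ε => deriv ψ 1 * lap Adj f u / gg f ε u) (𝓝 0)
      (𝓝 (deriv ψ 1 * lap Adj f u / 1)) :=
    tendsto_const_nhds.div (gg_tendsto f u) one_ne_zero
  have h2 : Tendsto (fun ε : ℝ => ε * KK Adj ψ f ε u) (𝓝 0)
      (𝓝 (0 * (deriv (deriv ψ) 1 * gammaF Adj f u))) :=
    tendsto_id.mul (KK_tendsto Adj ψ hψ f u)
  have := h1.add h2
  simpa using this

lemma NN_tendsto (ψ : ℝ → ℝ) (hψ : ContDiffOn ℝ 2 ψ (Set.Ioi 0)) (f : V → ℝ) (v : V) :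
    Tendsto (fun ε => NN Adj ψ f ε v) (𝓝 0)
      (𝓝 (-2 * deriv (deriv ψ) 1 * gamma2F Adj f v)) := by
  set a := deriv ψ 1
  set b := deriv (deriv ψ) 1
  have hsum : Tendsto (fun ε => ∑ w, if Adj v w then
     (a * lap Adj f w * (f v - f w) / (gg f ε w * gg f ε v)
      + qFun ψ (gg f ε w / gg f ε v) * (f w - f v)
          * (lap Adj f w / gg f ε w - lap Adj f v / gg f ε v) / gg f ε v
      - (gg f ε w * KK Adj ψ f ε w - gg f ε v * KK Adj ψ f ε v) / gg f ε v)
    else 0) (𝓝 0)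
      (𝓝 (∑ w, if Adj v w then
        (a * lap Adj f w * (f v - f w)
          + (a + b) * (f w - f v) * (lap Adj f w - lap Adj f v)
          - b * (gammaF Adj f w - gammaF Adj f v)) else 0)) := by
    apply tendsto_finset_sum
    intro w _
    by_cases haw : Adj v w
    · simp only [if_pos haw]
      have hgw := gg_tendsto f w
      have hgv := gg_tendsto f v
      have hratio : Tendsto (fun ε => gg f ε w / gg f ε v) (𝓝 (0:ℝ)) (𝓝 1) := by
        have := hgw.div hgv one_ne_zero
        rw [div_one] at this
        exact this
      have hq : Tendsto (fun ε => qFun ψ (gg f ε w / gg f ε v)) (𝓝 (0:ℝ)) (𝓝 (a + b)) :=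
        (qFun_tendsto ψ hψ).comp hratio
      have hKw := KK_tendsto Adj ψ hψ f w
      have hKv := KK_tendsto Adj ψ hψ f v
      have t1 : Tendsto (fun ε => a * lap Adj f w * (f v - f w) / (gg f ε w * gg f ε v))
          (𝓝 (0:ℝ)) (𝓝 (a * lap Adj f w * (f v - f w) / (1 * 1))) :=
        tendsto_const_nhds.div (hgw.mul hgv) (by norm_num)
      have t2 : Tendsto (fun ε => qFun ψ (gg f ε w / gg f ε v) * (f w - f v)
          * (lap Adj f w / gg f ε w - lap Adj f v / gg f ε v) / gg f ε v) (𝓝 (0:ℝ))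
          (𝓝 ((a + b) * (f w - f v) * (lap Adj f w / 1 - lap Adj f v / 1) / 1)) :=
        ((hq.mul tendsto_const_nhds).mul
          ((tendsto_const_nhds.div hgw one_ne_zero).sub
            (tendsto_const_nhds.div hgv one_ne_zero))).div hgv one_ne_zero
      have t3 : Tendsto (fun ε => (gg f ε w * KK Adj ψ f ε w
            - gg f ε v * KK Adj ψ f ε v) / gg f ε v) (𝓝 (0:ℝ))
          (𝓝 ((1 * (b * gammaF Adj f w) - 1 * (b * gammaF Adj f v)) / 1)) :=
        ((hgw.mul hKw).sub (hgv.mul hKv)).div hgv one_ne_zero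
      have := (t1.add t2).sub t3
      have hval : a * lap Adj f w * (f v - f w) / (1 * 1)
            + (a + b) * (f w - f v) * (lap Adj f w / 1 - lap Adj f v / 1) / 1
            - (1 * (b * gammaF Adj f w) - 1 * (b * gammaF Adj f v)) / 1
          = a * lap Adj f w * (f v - f w)
            + (a + b) * (f w - f v) * (lap Adj f w - lap Adj f v)
            - b * (gammaF Adj f w - gammaF Adj f v) := by
        ring
      rw [hval] at this
      exact this
    · simp only [if_neg haw]
      exact tendsto_const_nhds
  have htail : Tendsto (fun ε => lap Adj f v * PP Adj ψ f ε v / gg f ε v) (𝓝 (0:ℝ))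
      (𝓝 (lap Adj f v * (a * lap Adj f v) / 1)) :=
    (tendsto_const_nhds.mul (PP_tendsto Adj ψ hψ f v)).div (gg_tendsto f v) one_ne_zero
  have h := hsum.add htail
  have hpoint : (∑ w, if Adj v w then
        (a * lap Adj f w * (f v - f w)
          + (a + b) * (f w - f v) * (lap Adj f w - lap Adj f v)
          - b * (gammaF Adj f w - gammaF Adj f v)) else 0)
      + lap Adj f v * (a * lap Adj f v) / 1 = -2 * b * gamma2F Adj f v := by
    have halg := algId Adj f a b v
    rw [div_one]
    linear_combination halg
  rw [hpoint] at h
  exact h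

end CDaux

open CDaux in
/-- `CDψ(d,0)` implies the classical condition `CD((−ψ''(1)/ψ'(1)²)·d, 0)`. -/
theorem cdpsi_implies_cd (Adj : V → V → Prop) [DecidableRel Adj]
    (hsymm : Symmetric Adj) (hloop : ∀ v, ¬Adj v v)
    (ψ : ℝ → ℝ) (hψ : ContDiffOn ℝ 2 ψ (Set.Ioi 0))
    (hconc : ConcaveOn ℝ (Set.Ioi 0) ψ)
    (h1 : deriv ψ 1 ≠ 0) (h2 : deriv (deriv ψ) 1 ≠ 0)
    (d : ℝ) (hd : 0 < d)
    (hCD : ∀ f : V → ℝ, (∀ v, 0 < f v) → ∀ v,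
      gamma2Psi Adj ψ f v ≥ (1 / d) * (psiLap Adj ψ f v) ^ 2)
    (f : V → ℝ) (v : V) :
    gamma2F Adj f v ≥
      (1 / ((-(deriv (deriv ψ) 1) / (deriv ψ 1) ^ 2) * d)) * (lap Adj f v) ^ 2 := by
  -- ψ''(1) < 0
  have hble : deriv (deriv ψ) 1 ≤ 0 := by
    have hev : ∀ᶠ t in 𝓝[>] (0:ℝ),
        deriv (deriv ψ) 1 + eFun ψ t + eFun ψ (-t) ≤ 0 := by
      filter_upwards [Ioo_mem_nhdsGT (by norm_num : (0:ℝ) < 1)] with t ht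
      obtain ⟨ht0, ht1⟩ := ht
      have hx : (1:ℝ) - t ∈ Set.Ioi (0:ℝ) := by simp; linarith
      have hy : (1:ℝ) + t ∈ Set.Ioi (0:ℝ) := by simp; linarith
      have hc := hconc.2 hx hy (by norm_num : (0:ℝ) ≤ 1/2)
        (by norm_num : (0:ℝ) ≤ 1/2) (by norm_num)
      have hmid : (1/2 : ℝ) • ((1:ℝ) - t) + (1/2 : ℝ) • ((1:ℝ) + t) = 1 := by
        simp [smul_eq_mul]; ring
      rw [hmid] at hc
      have e1 : ψ (1 + t) = ψ 1 + deriv ψ 1 * t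
          + (deriv (deriv ψ) 1 / 2 + eFun ψ t) * t^2 := eFun_spec ψ t
      have e2 : ψ (1 - t) = ψ 1 + deriv ψ 1 * (-t)
          + (deriv (deriv ψ) 1 / 2 + eFun ψ (-t)) * (-t)^2 := by
        have := eFun_spec ψ (-t)
        simpa [sub_eq_add_neg] using this
      rw [smul_eq_mul, smul_eq_mul, e1, e2] at hc
      have ht2 : 0 < t^2 := by positivity
      nlinarith [hc, ht2]
    have hlim : Tendsto (fun t => deriv (deriv ψ) 1 + eFun ψ t + eFun ψ (-t))
        (𝓝[>] (0:ℝ)) (𝓝 (deriv (deriv ψ) 1 + 0 + 0)) := by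
      have hneg : Tendsto (fun t : ℝ => -t) (𝓝 (0:ℝ)) (𝓝 (0:ℝ)) := by
        simpa using (continuous_neg.tendsto (0:ℝ))
      exact ((tendsto_const_nhds.add (eFun_tendsto ψ hψ)).add
        ((eFun_tendsto ψ hψ).comp hneg)).mono_left nhdsWithin_le_nhds
    have := le_of_tendsto hlim hev
    linarith
  have hbneg : deriv (deriv ψ) 1 < 0 := hble.lt_of_ne h2
  have ha2 : 0 < (deriv ψ 1)^2 := pow_two_pos_of_ne_zero h1
  -- eventual positivity of g_ε
  have hgpos : ∀ᶠ ε in 𝓝 (0:ℝ), ∀ u, 0 < gg f ε u := by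
    rw [Filter.eventually_all]
    intro u
    exact (gg_tendsto f u).eventually (eventually_gt_nhds one_pos)
  -- eventual normalized CD inequality
  have hineq : ∀ᶠ ε in 𝓝[≠] (0:ℝ),
      (1/d) * (PP Adj ψ f ε v)^2 ≤ NN Adj ψ f ε v / 2 := by
    filter_upwards [hgpos.filter_mono nhdsWithin_le_nhds,
      eventually_mem_nhdsWithin] with ε hε hne
    have hne' : ε ≠ 0 := hne
    have hg' : ∀ u, gg f ε u ≠ 0 := fun u => (hε u).ne'
    have hcd := hCD (gg f ε) hε v
    rw [ge_iff_le, psiLap_eq Adj ψ f ε v (hg' v)] at hcd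
    have hmain := main_eq Adj ψ f ε v hg'
    have hg2 : gamma2Psi Adj ψ (gg f ε) v = ε^2 * NN Adj ψ f ε v / 2 := by
      linarith [hmain]
    rw [hg2] at hcd
    have hε2 : 0 < ε^2 := by positivity
    have h3 : ε^2 * ((1/d) * (PP Adj ψ f ε v)^2) ≤ ε^2 * (NN Adj ψ f ε v / 2) := by
      calc ε^2 * ((1/d) * (PP Adj ψ f ε v)^2)
          = (1/d) * (ε * PP Adj ψ f ε v)^2 := by ring
        _ ≤ ε^2 * NN Adj ψ f ε v / 2 := hcd
        _ = ε^2 * (NN Adj ψ f ε v / 2) := by ring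
    exact le_of_mul_le_mul_left h3 hε2
  -- pass to the limit
  have hT1 : Tendsto (fun ε => (1/d) * (PP Adj ψ f ε v)^2) (𝓝[≠] (0:ℝ))
      (𝓝 ((1/d) * (deriv ψ 1 * lap Adj f v)^2)) :=
    (tendsto_const_nhds.mul ((PP_tendsto Adj ψ hψ f v).pow 2)).mono_left
      nhdsWithin_le_nhds
  have hT2 : Tendsto (fun ε => NN Adj ψ f ε v / 2) (𝓝[≠] (0:ℝ))
      (𝓝 ((-2 * deriv (deriv ψ) 1 * gamma2F Adj f v) / 2)) :=
    ((NN_tendsto Adj ψ hψ f v).div_const 2).mono_left nhdsWithin_le_nhds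
  have key := le_of_tendsto_of_tendsto hT1 hT2 hineq
  -- rearrange
  rw [ge_iff_le, show (1 / ((-(deriv (deriv ψ) 1) / (deriv ψ 1) ^ 2) * d))
      * (lap Adj f v) ^ 2
      = (deriv ψ 1 * lap Adj f v)^2 / d / (-(deriv (deriv ψ) 1)) from by
    field_simp]
  rw [div_le_iff₀ (by linarith : (0:ℝ) < -(deriv (deriv ψ) 1))]
  have hrw : (deriv ψ 1 * lap Adj f v)^2 / d
      = (1/d) * (deriv ψ 1 * lap Adj f v)^2 := by ring
  rw [hrw]
  nlinarith [key]
end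
end

section
/- Monotonicity of the heat operator: if G is a finite graph, g, F : V × (0,T] → ℝ are differentiable in time with g ≥ 0, and F attains a maximum over V × (0,T] at (x₀,t₀), then 𝓛(g)·F(x₀,t₀) ≥ 𝓛(gF)(x₀,t₀), where 𝓛 = Δ − ∂_t with Δ acting in the space variable. -/
noncomputable section

open Finset Filter

variable {V : Type*} [Fintype V]

/-- Monotonicity of the heat operator at a maximum point of `F`. -/
theorem heat_monotonicity (Adj : V → V → Prop) [DecidableRel Adj]
    (hsymm : Symmetric Adj) (hloop : ∀ v, ¬Adj v v)
    (T : ℝ) (hT : 0 < T)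
    (g F : V → ℝ → ℝ)
    (hg : ∀ v, DifferentiableOn ℝ (g v) (Set.Ioc 0 T))
    (hF : ∀ v, DifferentiableOn ℝ (F v) (Set.Ioc 0 T))
    (hgnn : ∀ v, ∀ t ∈ Set.Ioc (0:ℝ) T, 0 ≤ g v t)
    (x₀ : V) (t₀ : ℝ) (ht₀ : t₀ ∈ Set.Ioc (0:ℝ) T)
    (hmax : ∀ v, ∀ t ∈ Set.Ioc (0:ℝ) T, F v t ≤ F x₀ t₀) :
    (lap Adj (fun v => g v t₀) x₀ - derivWithin (g x₀) (Set.Ioc 0 T) t₀) * F x₀ t₀ ≥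
      lap Adj (fun v => g v t₀ * F v t₀) x₀
        - derivWithin (fun t => g x₀ t * F x₀ t) (Set.Ioc 0 T) t₀ := by
  set s : Set ℝ := Set.Ioc (0:ℝ) T with hs
  have huniq : UniqueDiffWithinAt ℝ s t₀ := (uniqueDiffOn_Ioc 0 T) t₀ ht₀
  -- product rule
  have hprod : derivWithin (fun t => g x₀ t * F x₀ t) s t₀
      = derivWithin (g x₀) s t₀ * F x₀ t₀ + g x₀ t₀ * derivWithin (F x₀) s t₀ :=
    derivWithin_mul ((hg x₀) t₀ ht₀) ((hF x₀) t₀ ht₀)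
  -- derivative of F at its max point is nonnegative
  have ht0pos : (0:ℝ) < t₀ := ht₀.1
  have hseg : segment ℝ t₀ (t₀ / 2) ⊆ s := by
    rw [segment_symm, segment_eq_Icc (by linarith : t₀ / 2 ≤ t₀)]
    intro x hx
    exact ⟨lt_of_lt_of_le (by linarith) hx.1, le_trans hx.2 ht₀.2⟩
  have hcone : t₀ / 2 - t₀ ∈ posTangentConeAt s t₀ :=
    sub_mem_posTangentConeAt_of_segment_subset hseg
  have hmaxOn : IsLocalMaxOn (F x₀) s t₀ :=
    eventually_nhdsWithin_of_forall (fun t ht => hmax x₀ t ht)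
  have hfd : (fderivWithin ℝ (F x₀) s t₀ : ℝ → ℝ) (t₀ / 2 - t₀) ≤ 0 :=
    hmaxOn.fderivWithin_nonpos hcone
  have hfd' : (fderivWithin ℝ (F x₀) s t₀ : ℝ → ℝ) (t₀ / 2 - t₀)
      = (t₀ / 2 - t₀) * derivWithin (F x₀) s t₀ := by
    rw [show (t₀ / 2 - t₀ : ℝ) = (t₀ / 2 - t₀) • (1 : ℝ) by simp, map_smul]
    simp [derivWithin, smul_eq_mul]
  have hFderiv : 0 ≤ derivWithin (F x₀) s t₀ := by
    rw [hfd'] at hfd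
    nlinarith [ht₀.1, hfd]
  -- the sum part
  have hgt : 0 ≤ g x₀ t₀ := hgnn x₀ t₀ ht₀
  have hsum : lap Adj (fun v => g v t₀) x₀ * F x₀ t₀
      - lap Adj (fun v => g v t₀ * F v t₀) x₀
      = ∑ w, (if Adj x₀ w then g w t₀ * (F x₀ t₀ - F w t₀) else 0) := by
    rw [lap, lap, Finset.sum_mul, ← Finset.sum_sub_distrib]
    refine Finset.sum_congr rfl fun w _ => ?_
    by_cases h : Adj x₀ w <;> simp [h] <;> ring
  have hsum_nonneg : 0 ≤ ∑ w, (if Adj x₀ w then g w t₀ * (F x₀ t₀ - F w t₀) else 0) := by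
    refine Finset.sum_nonneg fun w _ => ?_
    by_cases h : Adj x₀ w <;> simp [h]
    exact mul_nonneg (hgnn w t₀ ht₀) (by linarith [hmax w t₀ ht₀])
  have := mul_nonneg hgt hFderiv
  rw [ge_iff_le, hprod]
  linarith [hsum ▸ hsum_nonneg]
end
end

section
/- ψ-Li-Yau inequality: if a finite graph G satisfies CDψ(d,0) and u is a positive solution of the heat equation on G, then −Δ^ψ u(x,t) ≤ d/(2t) for all vertices x and all t > 0. -/
noncomputable section

open Finset Filter

variable {V : Type*} [Fintype V]

section Helpers
open Topology

lemma deriv_nonneg_of_left_max {f : ℝ → ℝ} {L a c : ℝ} (hac : a < c)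
    (hmax : ∀ s ∈ Set.Ioo a c, f s ≤ f c) (hd : HasDerivAt f L c) : 0 ≤ L := by
  have h1 : Filter.Tendsto (slope f c) (𝓝[<] c) (𝓝 L) :=
    (hasDerivAt_iff_tendsto_slope.mp hd).mono_left
      (nhdsWithin_mono c fun y hy => Set.mem_compl_singleton_iff.mpr (ne_of_lt hy))
  refine ge_of_tendsto h1 ?_
  filter_upwards [Ioo_mem_nhdsLT_of_mem (Set.mem_Ioc.mpr ⟨hac, le_refl c⟩)] with y hy
  rw [slope_def_field]
  exact div_nonneg_iff.mpr (Or.inr ⟨by linarith [hmax y hy], by linarith [hy.2]⟩)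

lemma psiLap_contOn (Adj : V → V → Prop) [DecidableRel Adj] (ψ : ℝ → ℝ)
    (hψc : ContinuousOn ψ (Set.Ioi 0)) (u : V → ℝ → ℝ) (hu : ∀ v, Continuous (u v))
    (hpos : ∀ v s, 0 ≤ s → 0 < u v s) (v : V) :
    ContinuousOn (fun s => psiLap Adj ψ (fun w => u w s) v) (Set.Ici 0) := by
  unfold psiLap lap
  apply continuousOn_finset_sum
  intro w _
  have key : ∀ a : V, ContinuousOn (fun s => ψ (u a s / u v s)) (Set.Ici 0) := fun a =>
    hψc.comp (((hu a).continuousOn).div ((hu v).continuousOn)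
      (fun s hs => (hpos v s hs).ne'))
      (fun s hs => Set.mem_Ioi.mpr (div_pos (hpos a s hs) (hpos v s hs)))
  by_cases h : Adj v w
  · simp only [h, if_true]
    exact (key w).sub (key v)
  · simp only [h, if_false]; exact continuousOn_const

lemma psiLap_hasDeriv (Adj : V → V → Prop) [DecidableRel Adj]
    (ψ : ℝ → ℝ) (hψ : ContDiffOn ℝ 1 ψ (Set.Ioi 0)) (u : V → ℝ → ℝ)
    (hu : ∀ v, Differentiable ℝ (u v)) {s : ℝ}
    (hp : ∀ v, 0 < u v s)
    (hheat : ∀ v, deriv (u v) s = lap Adj (fun w => u w s) v) (v : V) :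
    HasDerivAt (fun r => psiLap Adj ψ (fun w => u w r) v)
      (omegaPsi Adj ψ (fun w => u w s) v) s := by
  classical
  have hvpos : ∀ᶠ r in 𝓝 s, 0 < u v r :=
    ((hu v).continuous.continuousAt).eventually (eventually_gt_nhds (hp v))
  have heq : (fun r => psiLap Adj ψ (fun w => u w r) v)
      =ᶠ[𝓝 s] fun r => ∑ w, if Adj v w then ψ (u w r / u v r) - ψ 1 else 0 := by
    filter_upwards [hvpos] with r hr
    unfold psiLap lap
    refine Finset.sum_congr rfl fun w _ => ?_
    simp only [div_self hr.ne']
  rw [heq.hasDerivAt_iff]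
  have key : ∀ w : V, HasDerivAt (fun r => ψ (u w r / u v r) - ψ 1)
      (deriv ψ (u w s / u v s) * (u w s / u v s) *
        (lap Adj (fun w' => u w' s) w / u w s - lap Adj (fun w' => u w' s) v / u v s)) s := by
    intro w
    have hw : HasDerivAt (u w) (lap Adj (fun w' => u w' s) w) s := by
      have h := (hu w).differentiableAt.hasDerivAt (x := s)
      rwa [hheat w] at h
    have hv' : HasDerivAt (u v) (lap Adj (fun w' => u w' s) v) s := by
      have h := (hu v).differentiableAt.hasDerivAt (x := s)
      rwa [hheat v] at h
    have hq : HasDerivAt (fun r => u w r / u v r)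
        ((lap Adj (fun w' => u w' s) w * u v s - u w s * lap Adj (fun w' => u w' s) v)
          / (u v s)^2) s := hw.div hv' (hp v).ne'
    have hqpos : (0:ℝ) < u w s / u v s := div_pos (hp w) (hp v)
    have hψd : HasDerivAt ψ (deriv ψ (u w s / u v s)) (u w s / u v s) :=
      ((hψ.differentiableOn one_ne_zero).differentiableAt (isOpen_Ioi.mem_nhds hqpos)).hasDerivAt
    have hcomp := (hψd.comp s hq).sub_const (ψ 1)
    refine hcomp.congr_deriv ?_
    have h1 := (hp v).ne'
    have h2 := (hp w).ne'
    field_simp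
  have hsum := HasDerivAt.fun_sum (u := Finset.univ)
    (A := fun w r => if Adj v w then ψ (u w r / u v r) - ψ 1 else 0)
    (A' := fun w => if Adj v w then deriv ψ (u w s / u v s) * (u w s / u v s) *
        (lap Adj (fun w' => u w' s) w / u w s - lap Adj (fun w' => u w' s) v / u v s) else 0)
    (fun w _ => by
      by_cases h : Adj v w
      · simpa [h] using key w
      · simpa [h] using hasDerivAt_const s (0:ℝ))
  convert hsum using 1
  unfold omegaPsi lap
  refine Finset.sum_congr rfl fun w _ => ?_
  by_cases h : Adj v w <;> simp [h]

end Helpers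

/-- ψ-Li-Yau inequality: under `CDψ(d,0)`, every positive solution of the heat
equation satisfies `−Δ^ψ u(x,t) ≤ d/(2t)`. -/
theorem psi_li_yau (Adj : V → V → Prop) [DecidableRel Adj]
    (hsymm : Symmetric Adj) (hloop : ∀ v, ¬Adj v v)
    (ψ : ℝ → ℝ) (hψ : ContDiffOn ℝ 1 ψ (Set.Ioi 0))
    (d : ℝ) (hd : 0 < d)
    (hCD : ∀ f : V → ℝ, (∀ v, 0 < f v) → ∀ v,
      gamma2Psi Adj ψ f v ≥ (1 / d) * (psiLap Adj ψ f v) ^ 2)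
    (u : V → ℝ → ℝ) (hu : ∀ v, Differentiable ℝ (u v))
    (hpos : ∀ v t, 0 ≤ t → 0 < u v t)
    (hheat : ∀ v, ∀ t : ℝ, 0 ≤ t → deriv (u v) t = lap Adj (fun w => u w t) v)
    (x : V) (t : ℝ) (ht : 0 < t) :
    -psiLap Adj ψ (fun w => u w t) x ≤ d / (2 * t) := by
  classical
  haveI : Nonempty V := ⟨x⟩
  set F : V → ℝ → ℝ := fun v s => s * (-psiLap Adj ψ (fun w => u w s) v) with hFdef
  have hFc : ∀ v, ContinuousOn (F v) (Set.Icc 0 t) := by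
    intro v
    have := ((psiLap_contOn Adj ψ hψ.continuousOn u (fun v => (hu v).continuous) hpos v).mono
      (Set.Icc_subset_Ici_self : Set.Icc (0:ℝ) t ⊆ Set.Ici 0)).neg
    exact (continuous_id.continuousOn).mul this
  set φ : ℝ → ℝ := fun s => Finset.univ.sup' Finset.univ_nonempty (fun v => F v s) with hφdef
  have hφc : ContinuousOn φ (Set.Icc 0 t) :=
    ContinuousOn.finset_sup'_apply Finset.univ_nonempty (fun v _ => hFc v)
  obtain ⟨s0, hs0mem, hs0max⟩ :=
    isCompact_Icc.exists_isMaxOn (Set.nonempty_Icc.mpr ht.le) hφc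
  obtain ⟨v0, -, hv0⟩ := Finset.exists_mem_eq_sup' (Finset.univ_nonempty (α := V))
    (fun v => F v s0)
  have hmax : ∀ v, ∀ s ∈ Set.Icc (0:ℝ) t, F v s ≤ F v0 s0 := by
    intro v s hs
    calc F v s ≤ φ s := by
          exact Finset.le_sup' (fun v => F v s) (Finset.mem_univ v)
    _ ≤ φ s0 := hs0max hs
    _ = F v0 s0 := hv0
  have hFxt : F x t ≤ F v0 s0 := hmax x t ⟨ht.le, le_rfl⟩
  have h2t : (0:ℝ) < 2 * t := by linarith
  by_cases hF0 : F v0 s0 ≤ 0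
  · have h1 : t * (-psiLap Adj ψ (fun w => u w t) x) ≤ 0 := le_trans hFxt hF0
    have h2 : -psiLap Adj ψ (fun w => u w t) x ≤ 0 := by
      nlinarith
    have h3 : 0 < d / (2 * t) := div_pos hd h2t
    linarith
  · push_neg at hF0
    have hs0pos : 0 < s0 := by
      rcases lt_or_eq_of_le hs0mem.1 with h | h
      · exact h
      · exfalso
        rw [← h] at hF0
        simp [hFdef] at hF0
    have hps0 : ∀ v, 0 < u v s0 := fun v => hpos v s0 hs0pos.le
    have hheat0 : ∀ v, deriv (u v) s0 = lap Adj (fun w => u w s0) v :=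
      fun v => hheat v s0 hs0pos.le
    set P0 : ℝ := psiLap Adj ψ (fun w => u w s0) v0 with hP0def
    set Ω : ℝ := omegaPsi Adj ψ (fun w => u w s0) v0 with hΩdef
    set L : ℝ := lap Adj (fun w => u w s0) v0 with hLdef
    -- derivative of F v0 at s0
    have hder : HasDerivAt (fun r => psiLap Adj ψ (fun w => u w r) v0) Ω s0 :=
      psiLap_hasDeriv Adj ψ hψ u hu hps0 hheat0 v0
    have hFder : HasDerivAt (F v0) (-P0 + s0 * (-Ω)) s0 := by
      have := (hasDerivAt_id s0).mul hder.neg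
      exact this.congr_deriv (by simp [hP0def])
    have hLnn : 0 ≤ -P0 + s0 * (-Ω) := by
      refine deriv_nonneg_of_left_max hs0pos (fun s hs => hmax v0 s ⟨hs.1.le, hs.2.le.trans hs0mem.2⟩) hFder
    -- spatial maximum principle
    have hPmin : ∀ w, P0 ≤ psiLap Adj ψ (fun w' => u w' s0) w := by
      intro w
      have h1 := hmax w s0 hs0mem
      have h2 : s0 * (-psiLap Adj ψ (fun w' => u w' s0) w) ≤ s0 * (-P0) := h1
      nlinarith
    have hsp : L * P0 ≤ lap Adj (fun w => u w s0 * psiLap Adj ψ (fun w' => u w' s0) w) v0 := by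
      have hterm : ∀ w : V,
          (if Adj v0 w then P0 * (u w s0 - u v0 s0) else 0) ≤
          (if Adj v0 w then u w s0 * psiLap Adj ψ (fun w' => u w' s0) w - u v0 s0 * P0 else 0) := by
        intro w
        by_cases h : Adj v0 w
        · simp only [h, if_true]
          have h1 := hPmin w
          have h2 := (hps0 w).le
          nlinarith
        · simp [h]
      have hsum := Finset.sum_le_sum (fun w (_ : w ∈ Finset.univ) => hterm w)
      have hleft : L * P0 = ∑ w, (if Adj v0 w then P0 * (u w s0 - u v0 s0) else 0) := by
        rw [hLdef]
        unfold lap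
        rw [Finset.sum_mul]
        refine Finset.sum_congr rfl fun w _ => ?_
        by_cases h : Adj v0 w
        · simp only [h, if_true]; ring
        · simp [h]
      rw [hleft]
      calc ∑ w, (if Adj v0 w then P0 * (u w s0 - u v0 s0) else 0)
          ≤ ∑ w, (if Adj v0 w then u w s0 * psiLap Adj ψ (fun w' => u w' s0) w - u v0 s0 * P0 else 0) := hsum
        _ = lap Adj (fun w => u w s0 * psiLap Adj ψ (fun w' => u w' s0) w) v0 := by
            unfold lap
            exact Finset.sum_congr rfl fun w _ => rfl
    -- curvature condition
    have hcd := hCD (fun w => u w s0) hps0 v0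
    have hu0 : 0 < u v0 s0 := hps0 v0
    have hΩbd : (1 / d) * P0 ^ 2 ≤ Ω / 2 := by
      unfold gamma2Psi at hcd
      rw [← hP0def, ← hΩdef, ← hLdef] at hcd
      have h1 : 0 ≤ (lap Adj (fun w => u w s0 * psiLap Adj ψ (fun w' => u w' s0) w) v0
          - L * P0) / u v0 s0 := div_nonneg (by linarith) hu0.le
      rw [sub_div] at h1
      linarith
    have h2P : 2 * P0 ^ 2 ≤ d * Ω := by
      have h3 : d * ((1 / d) * P0 ^ 2) ≤ d * (Ω / 2) :=
        mul_le_mul_of_nonneg_left hΩbd hd.le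
      have e1 : d * ((1 / d) * P0 ^ 2) = P0 ^ 2 := by field_simp
      nlinarith
    have hg0 : 0 < -P0 := by
      have : 0 < s0 * (-P0) := hF0
      nlinarith
    have hkey : s0 * (-P0) ≤ d / 2 := by
      nlinarith [mul_le_mul_of_nonneg_left h2P hs0pos.le,
        mul_le_mul_of_nonneg_left hLnn hd.le, sq_nonneg P0, mul_pos hs0pos hg0]
    have hxt : t * (-psiLap Adj ψ (fun w => u w t) x) ≤ d / 2 := le_trans hFxt hkey
    rw [show d / (2 * t) = d / 2 / t by rw [div_div]]
    rw [le_div_iff₀ ht]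
    linarith
end
end

section
/- Minimal integral estimate: for real T₁ < T₂, a continuous γ : [T₁,T₂] → [0,∞), and positive constants C₁, C₂, one has inf_{s∈[T₁,T₂]} ( C₂·√γ(s) − C₁·∫_s^{T₂} γ(t) dt ) ≤ C₂²/(C₁(T₂−T₁)). -/
noncomputable section

open Finset Filter

variable {V : Type*} [Fintype V]

/-- Minimal integral estimate. -/
theorem minimal_integral_estimate (T₁ T₂ C₁ C₂ : ℝ) (hT : T₁ < T₂)
    (hC₁ : 0 < C₁) (hC₂ : 0 < C₂)
    (γ : ℝ → ℝ) (hcont : ContinuousOn γ (Set.Icc T₁ T₂))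
    (hnn : ∀ t ∈ Set.Icc T₁ T₂, 0 ≤ γ t) :
    sInf ((fun s => C₂ * Real.sqrt (γ s) - C₁ * ∫ t in s..T₂, γ t) '' Set.Icc T₁ T₂)
      ≤ C₂ ^ 2 / (C₁ * (T₂ - T₁)) := by

  set M : ℝ := C₂ ^ 2 / (C₁ * (T₂ - T₁)) with hMdef
  have hTsub : 0 < T₂ - T₁ := sub_pos.2 hT
  have hM0 : 0 < M := div_pos (pow_pos hC₂ 2) (mul_pos hC₁ hTsub)
  set F : ℝ → ℝ := fun s => ∫ t in s..T₂, γ t with hFdef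
  have huIcc : Set.uIcc T₁ T₂ = Set.Icc T₁ T₂ := Set.uIcc_of_le hT.le
  have hint : IntervalIntegrable γ MeasureTheory.volume T₁ T₂ := by
    apply ContinuousOn.intervalIntegrable
    rwa [huIcc]
  have hsub1 : ∀ s ∈ Set.Icc T₁ T₂, IntervalIntegrable γ MeasureTheory.volume T₁ s := by
    intro s hs
    exact hint.mono_set (by rw [Set.uIcc_of_le hs.1, huIcc]; exact Set.Icc_subset_Icc_right hs.2)
  have hsub2 : ∀ s ∈ Set.Icc T₁ T₂, IntervalIntegrable γ MeasureTheory.volume s T₂ := by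
    intro s hs
    exact hint.mono_set (by rw [Set.uIcc_of_le hs.2, huIcc]; exact Set.Icc_subset_Icc_left hs.1)
  have hFnn : ∀ s ∈ Set.Icc T₁ T₂, 0 ≤ F s := by
    intro s hs
    apply intervalIntegral.integral_nonneg hs.2
    intro t ht
    exact hnn t ⟨le_trans hs.1 ht.1, ht.2⟩
  -- Main claim: some point has value ≤ M
  have key : ∃ s ∈ Set.Icc T₁ T₂, C₂ * Real.sqrt (γ s) - C₁ * F s ≤ M := by
    by_contra hcon
    push_neg at hcon
    set G : ℝ → ℝ := fun s => M + C₁ * F s with hGdef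
    have hGpos : ∀ s ∈ Set.Icc T₁ T₂, 0 < G s := fun s hs =>
      add_pos_of_pos_of_nonneg hM0 (mul_nonneg hC₁.le (hFnn s hs))
    have hGT2 : G T₂ = M := by
      simp [hGdef, hFdef, intervalIntegral.integral_same]
    have hsq : ∀ s ∈ Set.Icc T₁ T₂, (G s) ^ 2 ≤ C₂ ^ 2 * γ s := by
      intro s hs
      have h1 : G s < C₂ * Real.sqrt (γ s) := by
        have h := hcon s hs
        simp only [hGdef]
        linarith
      have h2 : (G s) ^ 2 ≤ (C₂ * Real.sqrt (γ s)) ^ 2 :=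
        pow_le_pow_left₀ (hGpos s hs).le h1.le 2
      calc (G s) ^ 2 ≤ (C₂ * Real.sqrt (γ s)) ^ 2 := h2
        _ = C₂ ^ 2 * (Real.sqrt (γ s)) ^ 2 := by ring
        _ = C₂ ^ 2 * γ s := by rw [Real.sq_sqrt (hnn s hs)]
    set k : ℝ := C₁ / C₂ ^ 2 with hkdef
    set H : ℝ → ℝ := fun s => (G s)⁻¹ - k * s with hHdef
    -- continuity of F on Icc
    have hFcont : ContinuousOn F (Set.Icc T₁ T₂) := by
      have hio : MeasureTheory.IntegrableOn γ (Set.uIcc T₁ T₂) MeasureTheory.volume := by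
        rw [huIcc]; exact hcont.integrableOn_Icc
      have hprim := intervalIntegral.continuousOn_primitive_interval (a := T₁) (b := T₂)
        (f := γ) (μ := MeasureTheory.volume) hio
      rw [huIcc] at hprim
      have heq : Set.EqOn F (fun s => (∫ t in T₁..T₂, γ t) - ∫ t in T₁..s, γ t)
          (Set.Icc T₁ T₂) := by
        intro s hs
        simp only [hFdef]
        rw [eq_sub_iff_add_eq, add_comm]
        exact intervalIntegral.integral_add_adjacent_intervals (hsub1 s hs) (hsub2 s hs)
      exact (continuousOn_const.sub hprim).congr heq
    have hHcont : ContinuousOn H (Set.Icc T₁ T₂) := by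
      apply ContinuousOn.sub
      · apply ContinuousOn.inv₀
        · exact continuousOn_const.add (continuousOn_const.mul hFcont)
        · intro s hs; exact (hGpos s hs).ne'
      · exact continuousOn_const.mul continuousOn_id
    have hmono : MonotoneOn H (Set.Icc T₁ T₂) := by
      apply monotoneOn_of_hasDerivWithinAt_nonneg (convex_Icc T₁ T₂) hHcont
        (f' := fun s => C₁ * γ s / (G s) ^ 2 - k)
      · intro s hs
        rw [interior_Icc] at hs ⊢
        have hsI : s ∈ Set.Icc T₁ T₂ := Set.Ioo_subset_Icc_self hs
        have hmeas : StronglyMeasurableAtFilter γ (nhds s)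
            MeasureTheory.volume :=
          (hcont.mono Set.Ioo_subset_Icc_self).stronglyMeasurableAtFilter isOpen_Ioo s hs
        have hca : ContinuousAt γ s := hcont.continuousAt (Icc_mem_nhds hs.1 hs.2)
        have hF' : HasDerivAt F (-γ s) s :=
          intervalIntegral.integral_hasDerivAt_left (hsub2 s hsI) hmeas hca
        have hG' : HasDerivAt G (C₁ * -γ s) s := by
          simpa [hGdef] using (hF'.const_mul C₁).const_add M
        have hGne : G s ≠ 0 := (hGpos s hsI).ne'
        have hinv : HasDerivAt (fun y => (G y)⁻¹) (-(C₁ * -γ s) / (G s) ^ 2) s :=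
          hG'.inv hGne
        have hH' : HasDerivAt H (-(C₁ * -γ s) / (G s) ^ 2 - k * 1) s :=
          hinv.sub ((hasDerivAt_id s).const_mul k)
        have hval : -(C₁ * -γ s) / (G s) ^ 2 - k * 1 = C₁ * γ s / (G s) ^ 2 - k := by
          ring
        rw [hval] at hH'
        exact hH'.hasDerivWithinAt
      · intro s hs
        rw [interior_Icc] at hs
        have hsI : s ∈ Set.Icc T₁ T₂ := Set.Ioo_subset_Icc_self hs
        have h := hsq s hsI
        have hG2 : 0 < (G s) ^ 2 := pow_pos (hGpos s hsI) 2
        rw [sub_nonneg, hkdef, div_le_div_iff₀ (pow_pos hC₂ 2) hG2]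
        nlinarith [hC₁.le]
    have h1 : H T₁ ≤ H T₂ := hmono ⟨le_refl T₁, hT.le⟩ ⟨hT.le, le_refl T₂⟩ hT.le
    have h2 : 0 < (G T₁)⁻¹ := inv_pos.2 (hGpos T₁ ⟨le_refl _, hT.le⟩)
    have hMinv : M⁻¹ = k * (T₂ - T₁) := by
      rw [hMdef, hkdef]
      field_simp
    have hk2 : k * (T₂ - T₁) = k * T₂ - k * T₁ := by ring
    simp only [hHdef, hGT2] at h1
    linarith
  obtain ⟨s, hs, hval⟩ := key
  by_cases hbdd : BddBelow
      ((fun s => C₂ * Real.sqrt (γ s) - C₁ * ∫ t in s..T₂, γ t) '' Set.Icc T₁ T₂)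
  · exact le_trans (csInf_le hbdd ⟨s, hs, rfl⟩) hval
  · rw [Real.sInf_of_not_bddBelow hbdd]
    exact hM0.le
end
end

section
/- Estimate of Γ^ψ: for a concave ψ ∈ C¹((0,∞)), a finite graph G, a positive function f, and adjacent vertices v ∼ w, one has log(f(w)/f(v)) ≤ √H_ψ · √(Γ^ψ(f)(v)), where H_ψ = sup_{x>1} (log x)²/ψ̄(x) and ψ̄(x) = ψ'(1)(x−1) − (ψ(x)−ψ(1)) (interpreted as +∞ if the supremum is infinite, in which case the statement is trivial; assume H_ψ < ∞). -/
noncomputable section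

open Finset Filter

variable {V : Type*} [Fintype V]

/-- Estimate of `Γ^ψ`: for adjacent vertices,
`log(f w / f v) ≤ √H_ψ · √(Γ^ψ(f)(v))`, where `H_ψ` is (a finite bound for) the Harnack
constant `sup_{x>1} (log x)²/ψ̄(x)`. -/
theorem gammaPsi_estimate (Adj : V → V → Prop) [DecidableRel Adj]
    (hsymm : Symmetric Adj) (hloop : ∀ v, ¬Adj v v)
    (ψ : ℝ → ℝ) (hψ : ContDiffOn ℝ 1 ψ (Set.Ioi 0))
    (hconc : ConcaveOn ℝ (Set.Ioi 0) ψ)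
    (Hψ : ℝ) (hH0 : 0 ≤ Hψ)
    (hH : ∀ x : ℝ, 1 < x → (Real.log x) ^ 2 ≤ Hψ * psibar ψ x)
    (f : V → ℝ) (hf : ∀ v, 0 < f v)
    (v w : V) (hvw : Adj v w) :
    Real.log (f w / f v) ≤ Real.sqrt Hψ * Real.sqrt (gammaPsi Adj ψ f v) := by
  have hdiff : DifferentiableAt ℝ ψ 1 := by
    have := (hψ.differentiableOn one_ne_zero).differentiableAt
      (isOpen_Ioi.mem_nhds (by norm_num : (1:ℝ) ∈ Set.Ioi 0))
    exact this
  -- psibar nonneg on Ioi 0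
  have hbar : ∀ x : ℝ, 0 < x → 0 ≤ psibar ψ x := by
    intro x hx
    unfold psibar
    rcases lt_trichotomy x 1 with h1 | h1 | h1
    · have hs := hconc.deriv_le_slope hx (by norm_num : (1:ℝ) ∈ Set.Ioi 0) h1 hdiff
      rw [slope_def_field, le_div_iff₀ (by linarith : (0:ℝ) < 1 - x)] at hs
      nlinarith
    · simp [h1]
    · have hs := hconc.slope_le_deriv (by norm_num : (1:ℝ) ∈ Set.Ioi 0)
        (Set.mem_Ioi.mpr hx) h1 hdiff
      rw [slope_def_field] at hs
      rw [div_le_iff₀ (by linarith)] at hs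
      nlinarith
  -- gammaPsi is a sum of nonneg terms, bounded below by the w term
  have hgv : psibar ψ (f v / f v) = 0 := by
    rw [div_self (hf v).ne']; simp [psibar]
  have key : psibar ψ (f w / f v) ≤ gammaPsi Adj ψ f v := by
    unfold gammaPsi lap
    have h := Finset.single_le_sum
      (f := fun u => if Adj v u then psibar ψ (f u / f v) - psibar ψ (f v / f v) else 0)
      (fun u _ => by
        by_cases h : Adj v u
        · simp only [h, if_true, hgv, sub_zero]
          exact hbar _ (div_pos (hf u) (hf v))
        · simp [h]) (Finset.mem_univ w)
    simpa [hvw, hgv] using h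
  have hgnn : 0 ≤ gammaPsi Adj ψ f v :=
    le_trans (hbar _ (div_pos (hf w) (hf v))) key
  rcases le_or_gt (f w) (f v) with hle | hlt
  · have : Real.log (f w / f v) ≤ 0 :=
      Real.log_nonpos (div_nonneg (hf w).le (hf v).le) ((div_le_one (hf v)).mpr hle)
    exact this.trans (by positivity)
  · have hx1 : 1 < f w / f v := (one_lt_div (hf v)).mpr hlt
    have h1 : (Real.log (f w / f v)) ^ 2 ≤ Hψ * gammaPsi Adj ψ f v :=
      (hH _ hx1).trans (by nlinarith [hbar (f w / f v) (by positivity)])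
    have h2 : Real.log (f w / f v) ≤ Real.sqrt (Hψ * gammaPsi Adj ψ f v) := by
      refine le_trans ?_ (Real.sqrt_le_sqrt h1)
      rw [Real.sqrt_sq_eq_abs]
      exact le_abs_self _
    rwa [Real.sqrt_mul hH0] at h2
end
end

section
/- If ψ ∈ C¹((0,∞)) is concave with second derivative at 1 existing and ψ''(1) < 0, then the Harnack constant H_ψ = sup_{x>1} (log x)²/ψ̄(x) satisfies 0 < H_ψ < ∞, where ψ̄(x) = ψ'(1)(x−1) − (ψ(x)−ψ(1)). -/
noncomputable section

open Finset Filter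

variable {V : Type*} [Fintype V]

open Set in
private lemma log_sq_le_four_mul (x : ℝ) (hx : 1 ≤ x) : (Real.log x) ^ 2 ≤ 4 * (x - 1) := by
  have hx0 : (0:ℝ) ≤ x := by linarith
  have hs1 : (1:ℝ) ≤ Real.sqrt x := by
    rw [show (1:ℝ) = Real.sqrt 1 by simp]; exact Real.sqrt_le_sqrt hx
  have hlog : Real.log x = 2 * Real.log (Real.sqrt x) := by
    rw [Real.log_sqrt hx0]; ring
  have h1 : Real.log (Real.sqrt x) ≤ Real.sqrt x - 1 :=
    Real.log_le_sub_one_of_pos (by linarith)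
  have h0 : 0 ≤ Real.log (Real.sqrt x) := Real.log_nonneg hs1
  have hsq : Real.sqrt x ^ 2 = x := Real.sq_sqrt hx0
  nlinarith [sq_nonneg (Real.sqrt x - 1), sq_nonneg (Real.log (Real.sqrt x))]

open Set

/-- Non-degeneration of the Harnack constant: if `ψ` is concave with `ψ''(1) < 0`,
then `H_ψ = sup_{x>1} (log x)²/ψ̄(x)` is finite and positive. -/
theorem harnack_constant_pos_finite (ψ : ℝ → ℝ)
    (hψ : ContDiffOn ℝ 2 ψ (Set.Ioi 0))
    (hconc : ConcaveOn ℝ (Set.Ioi 0) ψ)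
    (h2 : deriv (deriv ψ) 1 < 0) :
    ∃ H : ℝ, 0 < H ∧
      IsLUB {y : ℝ | ∃ x : ℝ, 1 < x ∧ y = (Real.log x) ^ 2 / psibar ψ x} H := by
  have h1mem : (1:ℝ) ∈ Ioi (0:ℝ) := by norm_num
  have hψ1 : DifferentiableOn ℝ ψ (Ioi 0) := hψ.differentiableOn two_ne_zero
  have hDψ : ContDiffOn ℝ 1 (deriv ψ) (Ioi 0) :=
    hψ.deriv_of_isOpen isOpen_Ioi le_rfl
  have hDψd : DifferentiableOn ℝ (deriv ψ) (Ioi 0) := hDψ.differentiableOn one_ne_zero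
  have hcont2 : ContinuousOn (deriv (deriv ψ)) (Ioi 0) :=
    (hDψ.deriv_of_isOpen (m := 0) isOpen_Ioi (by norm_num)).continuousOn
  -- derivative of psibar
  have hg' : ∀ x ∈ Ioi (0:ℝ), HasDerivAt (psibar ψ) (deriv ψ 1 - deriv ψ x) x := by
    intro x hx
    have h1 : HasDerivAt (fun y : ℝ => deriv ψ 1 * (y - 1)) (deriv ψ 1) x := by
      simpa using ((hasDerivAt_id x).sub_const 1).const_mul (deriv ψ 1)
    have h2' : HasDerivAt (fun y => ψ y - ψ 1) (deriv ψ x) x :=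
      ((hψ1.differentiableAt (isOpen_Ioi.mem_nhds hx)).hasDerivAt).sub_const (ψ 1)
    exact h1.sub h2'
  -- convexity of psibar
  have haff : ConvexOn ℝ (Ioi (0:ℝ)) (fun x : ℝ => deriv ψ 1 * (x - 1) + ψ 1) := by
    refine ⟨convex_Ioi 0, ?_⟩
    intro x _ y _ a b _ _ hab
    apply le_of_eq
    simp only [smul_eq_mul]
    linear_combination (deriv ψ 1 - ψ 1) * hab
  have hgconv : ConvexOn ℝ (Ioi (0:ℝ)) (psibar ψ) := by
    have h := haff.add hconc.neg
    have : psibar ψ = fun x => (deriv ψ 1 * (x - 1) + ψ 1) + (-ψ) x := by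
      funext x; simp [psibar]; ring
    rw [this]; exact h
  have hmono : MonotoneOn (deriv (psibar ψ)) (Ioi (0:ℝ)) :=
    hgconv.monotoneOn_deriv (fun x hx => (hg' x hx).differentiableAt)
  -- ε and δ
  set ε : ℝ := -(deriv (deriv ψ) 1) / 2 with hεdef
  have hε : 0 < ε := by simp only [hεdef]; linarith
  have hcontAt : ContinuousAt (deriv (deriv ψ)) 1 :=
    hcont2.continuousAt (isOpen_Ioi.mem_nhds h1mem)
  have hnear : ∀ᶠ x in nhds (1:ℝ), deriv (deriv ψ) x < -ε := by
    apply hcontAt.eventually_lt_const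
    simp only [hεdef]; linarith
  obtain ⟨δ0, hδ0, hball⟩ := Metric.eventually_nhds_iff.mp hnear
  set δ : ℝ := min (δ0 / 2) (1 / 2) with hδdef
  have hδ : 0 < δ := by positivity
  have hδle : δ ≤ δ0 / 2 := min_le_left _ _
  have hIccsub : Icc (1:ℝ) (1 + δ) ⊆ Ioi 0 := by
    intro x hx; exact lt_of_lt_of_le one_pos hx.1
  have hIcc2 : ∀ x ∈ Icc (1:ℝ) (1 + δ), deriv (deriv ψ) x < -ε := by
    intro x hx
    apply hball
    rw [Real.dist_eq, abs_lt]
    constructor <;> [linarith [hx.1]; linarith [hx.2, hδ0]]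
  -- Claim q : ε (x-1) ≤ deriv ψ 1 - deriv ψ x on Icc 1 (1+δ)
  have hQ : ∀ x ∈ Icc (1:ℝ) (1 + δ), ε * (x - 1) ≤ deriv ψ 1 - deriv ψ x := by
    set Q : ℝ → ℝ := fun t => (deriv ψ 1 - deriv ψ t) - ε * (t - 1) with hQdef
    have hQd : ∀ t ∈ Ioi (0:ℝ), HasDerivAt Q (-(deriv (deriv ψ) t) - ε) t := by
      intro t ht
      have h1 : HasDerivAt (fun y => deriv ψ 1 - deriv ψ y) (-(deriv (deriv ψ) t)) t := by
        exact ((hasDerivAt_const t (deriv ψ 1)).sub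
          ((hDψd.differentiableAt (isOpen_Ioi.mem_nhds ht)).hasDerivAt)).congr_deriv (by simp)
      have h2' : HasDerivAt (fun y : ℝ => ε * (y - 1)) ε t := by
        simpa using ((hasDerivAt_id t).sub_const 1).const_mul ε
      exact h1.sub h2'
    have hQmono : StrictMonoOn Q (Icc 1 (1 + δ)) := by
      apply strictMonoOn_of_deriv_pos (convex_Icc _ _)
      · intro t ht
        exact ((hQd t (hIccsub ht)).differentiableAt).continuousAt.continuousWithinAt
      · intro t ht
        rw [interior_Icc] at ht
        have ht' : t ∈ Icc (1:ℝ) (1 + δ) := ⟨le_of_lt ht.1, le_of_lt ht.2⟩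
        rw [(hQd t (hIccsub ht')).deriv]
        have := hIcc2 t ht'
        linarith
    intro x hx
    have hQ1 : Q 1 = 0 := by simp [hQdef]
    rcases eq_or_lt_of_le hx.1 with h | h
    · simp [hQdef, ← h]
    · have := hQmono (left_mem_Icc.mpr (by linarith)) hx h
      rw [hQ1] at this
      simp only [hQdef] at this
      linarith
  -- Claim A : ε (x-1)²/2 ≤ psibar ψ x on Icc 1 (1+δ)
  have hA : ∀ x ∈ Icc (1:ℝ) (1 + δ), ε * (x - 1) ^ 2 / 2 ≤ psibar ψ x := by
    set P : ℝ → ℝ := fun t => psibar ψ t - ε * (t - 1) ^ 2 / 2 with hPdef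
    have hPd : ∀ t ∈ Ioi (0:ℝ),
        HasDerivAt P ((deriv ψ 1 - deriv ψ t) - ε * (t - 1)) t := by
      intro t ht
      have h1 : HasDerivAt (fun y : ℝ => ε * (y - 1) ^ 2 / 2) (ε * (t - 1)) t := by
        have h0 : HasDerivAt (fun y : ℝ => (y - 1) ^ 2) (2 * (t - 1)) t := by
          exact (((hasDerivAt_id t).sub_const 1).pow 2).congr_deriv (by simp)
        have := (h0.const_mul (ε / 2))
        refine (this.congr_deriv (by ring)).congr_of_eventuallyEq ?_
        filter_upwards with y
        ring
      exact (hg' t ht).sub h1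
    have hPmono : MonotoneOn P (Icc 1 (1 + δ)) := by
      apply monotoneOn_of_deriv_nonneg (convex_Icc _ _)
      · intro t ht
        exact ((hPd t (hIccsub ht)).differentiableAt).continuousAt.continuousWithinAt
      · intro t ht
        rw [interior_Icc] at ht
        exact ((hPd t (hIccsub (Ioo_subset_Icc_self ht))).differentiableAt).differentiableWithinAt
      · intro t ht
        rw [interior_Icc] at ht
        have ht' : t ∈ Icc (1:ℝ) (1 + δ) := Ioo_subset_Icc_self ht
        rw [(hPd t (hIccsub ht')).deriv]
        linarith [hQ t ht']
    intro x hx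
    have hP1 : P 1 = 0 := by simp [hPdef, psibar]
    have := hPmono (left_mem_Icc.mpr (by linarith)) hx hx.1
    rw [hP1] at this
    simp only [hPdef] at this
    linarith
  -- Claim B : (εδ/2)(x-1) ≤ psibar ψ x for x ≥ 1+δ
  have hB : ∀ x : ℝ, 1 + δ ≤ x → ε * δ / 2 * (x - 1) ≤ psibar ψ x := by
    have hmemδ : (1 + δ : ℝ) ∈ Ioi (0:ℝ) := by simp; linarith
    have hδQ : ε * δ ≤ deriv ψ 1 - deriv ψ (1 + δ) := by
      have := hQ (1 + δ) (right_mem_Icc.mpr (by linarith))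
      simpa using this
    set R : ℝ → ℝ := fun t => psibar ψ t - ε * δ * t with hRdef
    have hRmono : MonotoneOn R (Ici (1 + δ)) := by
      apply monotoneOn_of_deriv_nonneg (convex_Ici _)
      · intro t ht
        have ht0 : t ∈ Ioi (0:ℝ) := by simp at ht ⊢; linarith
        exact (((hg' t ht0).sub
          (by simpa using (hasDerivAt_id t).const_mul (ε * δ))).differentiableAt).continuousAt.continuousWithinAt
      · intro t ht
        rw [interior_Ici] at ht
        have ht0 : t ∈ Ioi (0:ℝ) := by simp at ht ⊢; linarith
        exact (((hg' t ht0).sub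
          (by simpa using (hasDerivAt_id t).const_mul (ε * δ))).differentiableAt).differentiableWithinAt
      · intro t ht
        rw [interior_Ici] at ht
        have ht0 : t ∈ Ioi (0:ℝ) := by simp at ht ⊢; linarith
        have hRd : HasDerivAt R ((deriv ψ 1 - deriv ψ t) - ε * δ) t := by
          exact (hg' t ht0).sub
            (by simpa using (hasDerivAt_id t).const_mul (ε * δ) :
              HasDerivAt (fun y : ℝ => ε * δ * y) (ε * δ) t)
        rw [hRd.deriv]
        have h1d : deriv (psibar ψ) (1 + δ) = deriv ψ 1 - deriv ψ (1 + δ) :=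
          (hg' _ hmemδ).deriv
        have htd : deriv (psibar ψ) t = deriv ψ 1 - deriv ψ t := (hg' _ ht0).deriv
        have := hmono hmemδ ht0 (le_of_lt ht)
        rw [h1d, htd] at this
        linarith
    intro x hx
    have hstep := hRmono self_mem_Ici (mem_Ici.mpr hx) hx
    simp only [hRdef] at hstep
    have hAδ : ε * δ ^ 2 / 2 ≤ psibar ψ (1 + δ) := by
      have := hA (1 + δ) (right_mem_Icc.mpr (by linarith))
      simpa using this
    nlinarith [mul_pos hε hδ]
  -- positivity of psibar
  have hpos : ∀ x : ℝ, 1 < x → 0 < psibar ψ x := by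
    intro x hx
    rcases le_or_gt x (1 + δ) with h | h
    · have := hA x ⟨le_of_lt hx, h⟩
      nlinarith [sq_nonneg (x - 1), mul_pos hε (pow_pos (by linarith : (0:ℝ) < x - 1) 2)]
    · have := hB x (le_of_lt h)
      nlinarith [mul_pos hε hδ]
  -- the set
  set S := {y : ℝ | ∃ x : ℝ, 1 < x ∧ y = (Real.log x) ^ 2 / psibar ψ x} with hSdef
  have hy0S : (Real.log (1 + δ)) ^ 2 / psibar ψ (1 + δ) ∈ S :=
    ⟨1 + δ, by linarith, rfl⟩
  have hy0pos : 0 < (Real.log (1 + δ)) ^ 2 / psibar ψ (1 + δ) := by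
    apply div_pos
    · exact pow_pos (Real.log_pos (by linarith)) 2
    · exact hpos _ (by linarith)
  set M : ℝ := max (2 / ε) (8 / (ε * δ)) with hMdef
  have hbdd : ∀ y ∈ S, y ≤ M := by
    rintro y ⟨x, hx, rfl⟩
    have hgx := hpos x hx
    have hlog : Real.log x ≤ x - 1 := Real.log_le_sub_one_of_pos (by linarith)
    have hlog0 : 0 ≤ Real.log x := Real.log_nonneg (le_of_lt hx)
    rcases le_or_gt x (1 + δ) with h | h
    · refine le_trans ?_ (le_max_left _ _)
      rw [div_le_iff₀ hgx]
      have hAx := hA x ⟨le_of_lt hx, h⟩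
      have key : (x - 1) ^ 2 ≤ 2 / ε * psibar ψ x := by
        rw [← sub_nonneg]
        have h1 : 2 / ε * psibar ψ x - (x - 1) ^ 2
            = 2 / ε * (psibar ψ x - ε * (x - 1) ^ 2 / 2) := by
          field_simp
        rw [h1]
        have := sub_nonneg.mpr hAx
        positivity
      nlinarith [mul_nonneg (sub_nonneg.mpr hlog) (add_nonneg hlog0 (by linarith : (0:ℝ) ≤ x - 1))]
    · refine le_trans ?_ (le_max_right _ _)
      rw [div_le_iff₀ hgx]
      have hBx := hB x (le_of_lt h)
      have hlsq := log_sq_le_four_mul x (le_of_lt hx)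
      have key : 4 * (x - 1) ≤ 8 / (ε * δ) * psibar ψ x := by
        rw [← sub_nonneg]
        have h1 : 8 / (ε * δ) * psibar ψ x - 4 * (x - 1)
            = 8 / (ε * δ) * (psibar ψ x - ε * δ / 2 * (x - 1)) := by
          field_simp
          ring
        rw [h1]
        have := sub_nonneg.mpr hBx
        positivity
      linarith
  refine ⟨sSup S, ?_, isLUB_csSup ⟨_, hy0S⟩ ⟨M, hbdd⟩⟩
  exact lt_of_lt_of_le hy0pos (le_csSup ⟨M, hbdd⟩ hy0S)
end
end

section
/- H_log = 2: the supremum over x > 1 of (log x)² / (x − 1 − log x) equals 2. -/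
noncomputable section

open Finset Filter

variable {V : Type*} [Fintype V]

/-- `H_log = 2`. -/
theorem harnack_constant_log :
    IsLUB {y : ℝ | ∃ x : ℝ, 1 < x ∧ y = (Real.log x) ^ 2 / (x - 1 - Real.log x)}
      2 := by
  constructor
  · rintro y ⟨x, hx, rfl⟩
    set t := Real.log x with ht
    have htpos : 0 < t := Real.log_pos hx
    have hxe : x = Real.exp t := (Real.exp_log (by linarith)).symm
    have hquad : 1 + t + t ^ 2 / 2 ≤ Real.exp t := Real.quadratic_le_exp_of_nonneg htpos.le
    have hden : 0 < x - 1 - t := by rw [hxe]; nlinarith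
    rw [div_le_iff₀ hden]
    rw [hxe]
    nlinarith
  · intro b hb
    by_contra hlt
    push_neg at hlt
    have hb0 : 0 < b := by
      have h2 : Real.log 2 > 0 := Real.log_pos (by norm_num)
      have hd : 0 < 2 - 1 - Real.log 2 := by
        have := Real.log_lt_sub_one_of_pos (x := 2) (by norm_num) (by norm_num)
        linarith
      have hmem : (Real.log 2) ^ 2 / (2 - 1 - Real.log 2) ∈
          {y : ℝ | ∃ x : ℝ, 1 < x ∧ y = (Real.log x) ^ 2 / (x - 1 - Real.log x)} :=
        ⟨2, by norm_num, rfl⟩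
      have := hb hmem
      have hpos : 0 < (Real.log 2) ^ 2 / (2 - 1 - Real.log 2) := by positivity
      linarith
    set t := min 1 (9 * (2 - b) / (8 * b)) with htdef
    have htpos : 0 < t := lt_min one_pos (div_pos (by linarith) (by linarith))
    have ht1 : t ≤ 1 := min_le_left _ _
    have ht2 : t ≤ 9 * (2 - b) / (8 * b) := min_le_right _ _
    -- upper bound on exp t
    have hub : Real.exp t ≤ 1 + t + t ^ 2 / 2 + (2 / 9) * t ^ 3 := by
      have := Real.exp_bound' htpos.le ht1 (n := 3) (by norm_num)
      simp [Finset.sum_range_succ, Nat.factorial] at this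
      nlinarith [this]
    have hlb : 1 + t < Real.exp t := by
      have := Real.add_one_lt_exp (x := t) htpos.ne'
      linarith
    set x := Real.exp t with hxdef
    have hx1 : 1 < x := Real.one_lt_exp_iff.mpr htpos
    have hlog : Real.log x = t := Real.log_exp t
    have hmem : (Real.log x) ^ 2 / (x - 1 - Real.log x) ∈
        {y : ℝ | ∃ x : ℝ, 1 < x ∧ y = (Real.log x) ^ 2 / (x - 1 - Real.log x)} :=
      ⟨x, hx1, rfl⟩
    have hle := hb hmem
    rw [hlog] at hle
    have hden : 0 < x - 1 - t := by simp only [hxdef]; linarith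
    have hdenub : x - 1 - t ≤ t ^ 2 / 2 + (2 / 9) * t ^ 3 := by
      simp only [hxdef]; linarith
    -- t^2 / (x - 1 - t) ≥ 2 / (1 + (4/9) t) > b
    have key : t ^ 2 / (x - 1 - t) > b := by
      have h1 : t ^ 2 / (x - 1 - t) ≥ t ^ 2 / (t ^ 2 / 2 + (2 / 9) * t ^ 3) :=
        div_le_div_of_nonneg_left (by positivity) hden hdenub
      have h2 : t ^ 2 / (t ^ 2 / 2 + (2 / 9) * t ^ 3) = 2 / (1 + (4 / 9) * t) := by
        rw [div_eq_div_iff (by positivity) (by positivity)]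
        ring
      have h3 : 2 / (1 + (4 / 9) * t) > b := by
        rw [gt_iff_lt, lt_div_iff₀ (by positivity)]
        have : t < 9 * (2 - b) / (4 * b) := lt_of_le_of_lt ht2 (by
          rw [div_lt_div_iff₀ (by positivity) (by positivity)]
          nlinarith)
        rw [lt_div_iff₀ (by positivity)] at this
        nlinarith
      linarith [h1, h2 ▸ h1]
    linarith
end
end

section
/- H_√ = 8: the supremum over x > 1 of (log x)² / ((x+1)/2 − √x) equals 8. -/
noncomputable section

open Finset Filter

variable {V : Type*} [Fintype V]

/-- `H_√ = 8`. -/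
theorem harnack_constant_sqrt :
    IsLUB {y : ℝ | ∃ x : ℝ, 1 < x ∧
        y = (Real.log x) ^ 2 / ((x + 1) / 2 - Real.sqrt x)} 8 := by
  constructor
  · rintro y ⟨x, hx, rfl⟩
    set t := Real.sqrt x with ht
    have ht0 : (0:ℝ) < t := Real.sqrt_pos.2 (by linarith)
    have ht1 : 1 < t := by
      rw [ht, show (1:ℝ) = Real.sqrt 1 from Real.sqrt_one.symm]
      exact Real.sqrt_lt_sqrt (by norm_num) hx
    have hx' : x = t ^ 2 := by rw [ht, Real.sq_sqrt (by linarith)]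
    have hden : (x + 1) / 2 - t = (t - 1) ^ 2 / 2 := by rw [hx']; ring
    have hlog : Real.log x = 2 * Real.log t := by
      rw [hx', Real.log_pow]; push_cast; ring
    have hlt : Real.log t ≤ t - 1 := by
      have := Real.log_le_sub_one_of_pos ht0; linarith
    have hlogpos : 0 < Real.log t := Real.log_pos ht1
    have hdpos : (0:ℝ) < (t - 1) ^ 2 / 2 := div_pos (pow_pos (sub_pos.2 ht1) 2) two_pos
    rw [hlog, hden, div_le_iff₀ hdpos]
    nlinarith [sq_nonneg (Real.log t), sq_nonneg (t - 1 - Real.log t)]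
  · intro b hb
    have hmem : ∀ t : ℝ, 1 < t →
        8 * (Real.log t / (t - 1)) ^ 2 ∈ {y : ℝ | ∃ x : ℝ, 1 < x ∧
          y = (Real.log x) ^ 2 / ((x + 1) / 2 - Real.sqrt x)} := by
      intro t ht
      refine ⟨t ^ 2, one_lt_pow₀ ht (by norm_num), ?_⟩
      have ht0 : (0:ℝ) ≤ t := by linarith
      have hs : Real.sqrt (t ^ 2) = t := Real.sqrt_sq ht0
      have hlog : Real.log (t ^ 2) = 2 * Real.log t := by
        rw [Real.log_pow]; push_cast; ring
      have hne : t - 1 ≠ 0 := by intro h; linarith [sub_eq_zero.1 h]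
      rw [hs, hlog]
      have hden : (t ^ 2 + 1) / 2 - t = (t - 1) ^ 2 / 2 := by ring
      rw [hden]
      field_simp
      ring
    have htend : Tendsto (fun t : ℝ => 8 * (Real.log t / (t - 1)) ^ 2)
        (nhdsWithin 1 (Set.Ioi 1)) (nhds 8) := by
      have hd : HasDerivAt Real.log 1 1 := by
        simpa using Real.hasDerivAt_log one_ne_zero
      have hslope := hasDerivAt_iff_tendsto_slope.1 hd
      have hslope' : Tendsto (slope Real.log 1) (nhdsWithin 1 (Set.Ioi 1)) (nhds 1) :=
        hslope.mono_left (nhdsWithin_mono _ (fun x hx => ne_of_gt hx))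
      have h2 : Tendsto (fun t : ℝ => 8 * (slope Real.log 1 t) ^ 2)
          (nhdsWithin 1 (Set.Ioi 1)) (nhds (8 * 1 ^ 2)) :=
        tendsto_const_nhds.mul (hslope'.pow 2)
      simp only [one_pow, mul_one] at h2
      refine h2.congr' ?_
      filter_upwards [self_mem_nhdsWithin] with t ht
      simp [slope_def_field]
    refine le_of_tendsto htend ?_
    filter_upwards [self_mem_nhdsWithin] with t ht
    exact hb (hmem t ht)
end
end

section
/- Lower bound C_log ≥ 1/2: for all x, y > 0 with xy ≠ 1, the quantity (x+y)·(1/(xy) − 1 + log(xy)) / (log(xy))² is at least 1/2; equivalently inf_{x,y>0} ψ̃(x,y)/(log x + log y)² ≥ 1/2 where ψ̃(x,y) = (1/x + 1/y)(1 − xy) + x(log y + log x) + y(log x + log y) simplifies for ψ = log to (x+y)(1/(xy) − 1 + log(xy)). -/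
noncomputable section

open Finset Filter

variable {V : Type*} [Fintype V]

set_option maxHeartbeats 800000 in
/-- Lower bound `C_log ≥ 1/2`. -/
theorem c_log_lower_bound (x y : ℝ) (hx : 0 < x) (hy : 0 < y) (hxy : x * y ≠ 1) :
    (1 : ℝ) / 2 ≤
      (x + y) * (1 / (x * y) - 1 + Real.log (x * y)) / (Real.log (x * y)) ^ 2 := by
  have hxy0 : (0 : ℝ) < x * y := by positivity
  set t := Real.log (x * y) with htdef
  have hexp : Real.exp t = x * y := Real.exp_log hxy0
  have htne : t ≠ 0 := by
    intro h
    rw [h, Real.exp_zero] at hexp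
    exact hxy hexp.symm
  have ht2 : (0 : ℝ) < t ^ 2 := by positivity
  set a := Real.exp (-(t/2)) with hadef
  set b := Real.exp (t/2) with hbdef
  set c := Real.exp (t/4) with hcdef
  set d := Real.exp (-(t/4)) with hddef
  have ha : 0 < a := Real.exp_pos _
  have hb : 0 < b := Real.exp_pos _
  have hab : a * b = 1 := by rw [hadef, hbdef, ← Real.exp_add]; norm_num
  have hcd : c * d = 1 := by rw [hcdef, hddef, ← Real.exp_add]; norm_num
  have hcc : c * c = b := by rw [hcdef, hbdef, ← Real.exp_add]; ring_nf
  have hdd : d * d = a := by rw [hddef, hadef, ← Real.exp_add]; ring_nf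
  have hbb : b * b = x * y := by rw [hbdef, ← Real.exp_add, ← hexp]; ring_nf
  have haa : a * a = 1 / (x * y) := by
    have h' : a * a = Real.exp (-t) := by rw [hadef, ← Real.exp_add]; ring_nf
    rw [h', Real.exp_neg, hexp, one_div]
  -- step 1 : 1/(x*y) - 1 + t ≥ (1 - a)^2
  have h1 : (1 - a) ^ 2 ≤ 1 / (x * y) - 1 + t := by
    rw [← haa]
    have hlin := Real.add_one_le_exp (-(t/2))
    rw [← hadef] at hlin
    nlinarith [hlin]
  have h1nn : (0 : ℝ) ≤ 1 / (x * y) - 1 + t := le_trans (sq_nonneg _) h1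
  -- step 2 : x + y ≥ 2 * b
  have h2 : 2 * b ≤ x + y := by nlinarith [sq_nonneg (x - y), hbb, hb, hx, hy]
  -- step 3 : b * (1 - a)^2 = (c - d)^2
  have h3 : b * (1 - a) ^ 2 = (c - d) ^ 2 := by
    linear_combination -hcc - hdd + 2 * hcd + (a - 2) * hab
  -- step 4 : (c - d)^2 ≥ (t/2)^2 via sinh
  have hsinh : Real.sinh (t/4) = (c - d) / 2 := by
    rw [Real.sinh_eq, hcdef, hddef]
  have h4 : (t/2) ^ 2 ≤ (c - d) ^ 2 := by
    have habs : |t/4| ≤ |Real.sinh (t/4)| := by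
      rcases le_or_gt 0 (t/4) with h | h
      · have hs := Real.self_le_sinh_iff.mpr h
        rw [abs_of_nonneg h, abs_of_nonneg (le_trans h hs)]
        exact hs
      · have h' : 0 ≤ -(t/4) := by linarith
        have hs := Real.self_le_sinh_iff.mpr h'
        rw [Real.sinh_neg] at hs
        rw [abs_of_neg h, abs_of_neg (by linarith : Real.sinh (t/4) < 0)]
        linarith
    have hsq : (t/4) ^ 2 ≤ (Real.sinh (t/4)) ^ 2 := by
      rw [← sq_abs (t/4), ← sq_abs (Real.sinh (t/4))]
      exact pow_le_pow_left₀ (abs_nonneg _) habs 2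
    rw [hsinh] at hsq
    nlinarith [hsq]
  -- combine
  have hN : t ^ 2 / 2 ≤ (x + y) * (1 / (x * y) - 1 + t) := by
    have s1 : 2 * b * (1 - a) ^ 2 ≤ (x + y) * (1 / (x * y) - 1 + t) := by
      have hm := mul_le_mul h2 h1 (sq_nonneg _) (by linarith)
      linarith
    have e1 : (t/2) ^ 2 = t ^ 2 / 4 := by ring
    nlinarith [h3, h4, e1]
  rw [le_div_iff₀ ht2]
  linarith
end
end

section
/- Degeneration of C_ψ: (1) if ψ ∈ C¹((0,∞)) is concave then ψ̃(x,y) ≥ 0 for all x,y > 0, where ψ̃(x,y) = (ψ'(x)+ψ'(y))(1−xy) + x(ψ(y)−ψ(1/x)) + y(ψ(x)−ψ(1/y)); (2) if there exists x > 0 with ψ(x) + ψ(1/x) ≠ 2ψ(1), then ψ̃(x, 1/x) = 0 while (ψ(x)+ψ(1/x)−2ψ(1))² > 0, so the infimum C_ψ := inf_{x,y>0} ψ̃(x,y)/(ψ(x)+ψ(y)−2ψ(1))² is ≤ 0. -/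
noncomputable section

open Finset Filter

variable {V : Type*} [Fintype V]

/-- `ψ̃(x,y) = (ψ'(x)+ψ'(y))(1−xy) + x(ψ(y)−ψ(1/x)) + y(ψ(x)−ψ(1/y))`. -/
noncomputable def psiTilde (ψ : ℝ → ℝ) (x y : ℝ) : ℝ :=
  (deriv ψ x + deriv ψ y) * (1 - x * y) + x * (ψ y - ψ (1 / x)) + y * (ψ x - ψ (1 / y))

private lemma tangent_le_aux {ψ : ℝ → ℝ} {a b : ℝ} (hc : ConcaveOn ℝ (Set.Ioi 0) ψ)
    (hd : DifferentiableAt ℝ ψ a) (ha : a ∈ Set.Ioi (0:ℝ)) (hb : b ∈ Set.Ioi (0:ℝ)) :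
    ψ b ≤ ψ a + deriv ψ a * (b - a) := by
  rcases lt_trichotomy a b with h | rfl | h
  · have H := hc.neg.deriv_le_slope ha hb h hd.neg
    rw [Pi.neg_def, deriv.fun_neg, slope_def_field] at H
    rw [le_div_iff₀ (by linarith)] at H
    nlinarith
  · simp
  · have H := hc.neg.slope_le_deriv hb ha h hd.neg
    rw [Pi.neg_def, deriv.fun_neg, slope_def_field] at H
    rw [div_le_iff₀ (by linarith)] at H
    nlinarith

/-- Degeneration of `C_ψ`: (1) concavity gives `ψ̃ ≥ 0`; (2) if the symmetry
`ψ(x)+ψ(1/x)=2ψ(1)` fails somewhere, then `ψ̃(x,1/x)=0` while the denominator is positive,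
so `C_ψ ≤ 0`. -/
theorem c_psi_degeneration (ψ : ℝ → ℝ) (hψ : ContDiffOn ℝ 1 ψ (Set.Ioi 0)) :
    (ConcaveOn ℝ (Set.Ioi 0) ψ →
      ∀ x y : ℝ, 0 < x → 0 < y → 0 ≤ psiTilde ψ x y) ∧
    (∀ x : ℝ, 0 < x → ψ x + ψ (1 / x) ≠ 2 * ψ 1 →
      psiTilde ψ x (1 / x) = 0 ∧ 0 < (ψ x + ψ (1 / x) - 2 * ψ 1) ^ 2) ∧
    ((∃ x : ℝ, 0 < x ∧ ψ x + ψ (1 / x) ≠ 2 * ψ 1) →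
      sInf {r : ℝ | ∃ x y : ℝ, 0 < x ∧ 0 < y ∧
        r = psiTilde ψ x y / (ψ x + ψ y - 2 * ψ 1) ^ 2} ≤ 0) := by
  have hdiff : ∀ a : ℝ, 0 < a → DifferentiableAt ℝ ψ a := fun a ha =>
    ((hψ.differentiableOn one_ne_zero) a ha).differentiableAt (isOpen_Ioi.mem_nhds ha)
  have key : ∀ x : ℝ, 0 < x → psiTilde ψ x (1 / x) = 0 := by
    intro x hx
    unfold psiTilde
    rw [one_div_one_div, mul_one_div_cancel hx.ne']
    ring
  refine ⟨?_, ?_, ?_⟩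
  · intro hc x y hx hy
    have h1 := tangent_le_aux hc (hdiff x hx) hx (Set.mem_Ioi.mpr (one_div_pos.mpr hy))
    have h2 := tangent_le_aux hc (hdiff y hy) hy (Set.mem_Ioi.mpr (one_div_pos.mpr hx))
    have e1 : y * (ψ x + deriv ψ x * (1 / y - x)) = y * ψ x + deriv ψ x * (1 - x * y) := by
      field_simp
    have e2 : x * (ψ y + deriv ψ y * (1 / x - y)) = x * ψ y + deriv ψ y * (1 - x * y) := by
      field_simp
    have H1 : y * ψ (1 / y) ≤ y * ψ x + deriv ψ x * (1 - x * y) := by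
      rw [← e1]; exact mul_le_mul_of_nonneg_left h1 hy.le
    have H2 : x * ψ (1 / x) ≤ x * ψ y + deriv ψ y * (1 - x * y) := by
      rw [← e2]; exact mul_le_mul_of_nonneg_left h2 hx.le
    unfold psiTilde
    nlinarith [H1, H2]
  · intro x hx hne
    refine ⟨key x hx, ?_⟩
    have : ψ x + ψ (1 / x) - 2 * ψ 1 ≠ 0 := sub_ne_zero.mpr hne
    positivity
  · rintro ⟨x, hx, hne⟩
    have h0 : (0:ℝ) ∈ {r : ℝ | ∃ x y : ℝ, 0 < x ∧ 0 < y ∧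
        r = psiTilde ψ x y / (ψ x + ψ y - 2 * ψ 1) ^ 2} :=
      ⟨x, 1 / x, hx, one_div_pos.mpr hx, by rw [key x hx, zero_div]⟩
    by_cases hbdd : BddBelow {r : ℝ | ∃ x y : ℝ, 0 < x ∧ 0 < y ∧
        r = psiTilde ψ x y / (ψ x + ψ y - 2 * ψ 1) ^ 2}
    · exact csInf_le hbdd h0
    · rw [Real.sInf_of_not_bddBelow hbdd]
end
end
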